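/- arXiv:2409.14787 — 3 statements merged into one kernel-verified Lean document; each statement's English description precedes it below -/
import Mathlib

section
/- Let G be a simple graph that is a brick (i.e., G is 3-connected and, for every two distinct vertices x and y, the graph obtained from G by deleting x and y has a perfect matching), and let u be a vertex of degree 3 in G with neighbors a, b, c. Then the triangle-insertion G⟨u⟩ — the graph obtained from G − u by adding three new vertices x, y, z that are pairwise adjacent, together with the edges xa, yb, zc — is also a brick. -/
open SimpleGraph

/-- The number of perfect matchings of a graph. -/
noncomputable def numPM {V : Type*} (G : SimpleGraph V) : ℕ :=
  Set.ncard {M : G.Subgraph | M.IsPerfectMatching}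

/-- A graph is 3-connected if it has at least 4 vertices and deleting any set of at most
two vertices leaves a connected graph. -/
def ThreeConnected {V : Type*} [Fintype V] (G : SimpleGraph V) : Prop :=
  4 ≤ Fintype.card V ∧
    ∀ s : Set V, s.ncard ≤ 2 → (G.induce (sᶜ : Set V)).Connected

/-- A brick: a 3-connected graph such that deleting any two distinct vertices leaves
a graph with a perfect matching (Edmonds–Lovász–Pulleyblank characterization). -/
def IsBrick {V : Type*} [Fintype V] (G : SimpleGraph V) : Prop :=
  ThreeConnected G ∧
    ∀ x y : V, x ≠ y →
      ∃ M : (G.induce {v : V | v ≠ x ∧ v ≠ y}).Subgraph, M.IsPerfectMatching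

/-- A brick is extremal when its number of perfect matchings equals |E| - |V| + 1. -/
def IsExtremal {V : Type*} [Fintype V] (G : SimpleGraph V) : Prop :=
  numPM G + Fintype.card V = G.edgeSet.ncard + 1

/-- Triangle-insertion at a vertex `u` with neighbors `a`, `b`, `c`: delete `u`,
add three pairwise adjacent new vertices `x = inr 0`, `y = inr 1`, `z = inr 2`,
together with the edges `x a`, `y b`, `z c`. -/
def triangleInsert {V : Type*} (G : SimpleGraph V) (u a b c : V) :
    SimpleGraph ({v : V // v ≠ u} ⊕ Fin 3) :=
  SimpleGraph.fromRel (fun p q =>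
    (∃ v w : {v : V // v ≠ u}, p = Sum.inl v ∧ q = Sum.inl w ∧ G.Adj v w) ∨
    (∃ v : {v : V // v ≠ u}, p = Sum.inl v ∧
      ((q = Sum.inr 0 ∧ (v : V) = a) ∨ (q = Sum.inr 1 ∧ (v : V) = b) ∨
       (q = Sum.inr 2 ∧ (v : V) = c))) ∨
    (∃ i j : Fin 3, p = Sum.inr i ∧ q = Sum.inr j))

/-! ### Auxiliary lemmas -/

lemma pm_of_fun {W : Type*} (H : SimpleGraph W) (s : Set W) (f : W → W)
    (h : ∀ v ∈ s, f v ∈ s ∧ f (f v) = v ∧ H.Adj v (f v)) :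
    ∃ M : (H.induce s).Subgraph, M.IsPerfectMatching := by
  refine ⟨{ verts := Set.univ
            Adj := fun x y => (y : W) = f (x : W)
            adj_sub := ?_
            edge_vert := fun _ => trivial
            symm := ?_ }, ?_, fun v => trivial⟩
  · rintro x y (hy : (y : W) = f x)
    show H.Adj (x : W) (y : W)
    rw [hy]
    exact (h x x.2).2.2
  · constructor
    rintro x y (hy : (y : W) = f x)
    show (x : W) = f (y : W)
    rw [hy]
    exact ((h x x.2).2.1).symm
  · rintro v -
    refine ⟨⟨f v, (h v v.2).1⟩, rfl, ?_⟩
    rintro y hy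
    exact Subtype.ext hy

lemma fun_of_pm {W : Type*} (H : SimpleGraph W) (s : Set W)
    (M : (H.induce s).Subgraph) (hM : M.IsPerfectMatching) :
    ∃ f : W → W, ∀ v ∈ s, f v ∈ s ∧ f (f v) = v ∧ H.Adj v (f v) := by
  classical
  choose g hg hg' using fun (x : s) => (hM.1 (hM.2 x))
  refine ⟨fun v => if hv : v ∈ s then (g ⟨v, hv⟩ : W) else v, ?_⟩
  intro v hv
  have h1 := hg ⟨v, hv⟩
  refine ⟨by simp only [dif_pos hv]; exact (g ⟨v, hv⟩).2, ?_, ?_⟩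
  · simp only [dif_pos hv, dif_pos (g ⟨v, hv⟩).2]
    have h2 : M.Adj (g ⟨v, hv⟩) ⟨v, hv⟩ := h1.symm
    have := hg' (g ⟨v, hv⟩) ⟨v, hv⟩ h2
    rw [Subtype.ext_iff] at this
    simpa using this.symm
  · simp only [dif_pos hv]
    exact M.adj_sub h1

def att {V : Type*} (a b c : V) : Fin 3 → V := ![a, b, c]

def other (i j : Fin 3) : Fin 3 := if i ≠ 0 ∧ j ≠ 0 then 0 else if i ≠ 1 ∧ j ≠ 1 then 1 else 2

lemma other_ne_left {i j : Fin 3} (h : i ≠ j) : other i j ≠ i := by revert h; revert i j; decide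
lemma other_ne_right {i j : Fin 3} (h : i ≠ j) : other i j ≠ j := by revert h; revert i j; decide
lemma other_other {i j : Fin 3} (h : i ≠ j) : other (other i j) j = i := by
  revert h; revert i j; decide
lemma eq_other {r i j : Fin 3} (hij : i ≠ j) (h1 : r ≠ i) (h2 : r ≠ j) : r = other i j := by
  revert hij h1 h2; revert r i j; decide

section adj
variable {V : Type*} {G : SimpleGraph V} {u a b c : V}

lemma ti_adj_inl_inl {v w : {v : V // v ≠ u}} :
    (triangleInsert G u a b c).Adj (Sum.inl v) (Sum.inl w) ↔ G.Adj v w := by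
  constructor
  · rintro ⟨hne, h | h⟩ <;>
    · rcases h with (⟨v', w', h1, h2, h3⟩ | ⟨v', h1, h⟩ | ⟨i, j, h1, h2⟩) <;>
        simp_all only [Sum.inl.injEq, reduceCtorEq, and_false, false_and, or_self, exists_const] <;>
        first | exact h3 | exact h3.symm
  · intro h
    exact ⟨by simp only [ne_eq, Sum.inl.injEq]; exact fun e => h.ne (by rw [e]),
      Or.inl (Or.inl ⟨v, w, rfl, rfl, h⟩)⟩

lemma ti_adj_inl_inr {v : {v : V // v ≠ u}} {i : Fin 3} :
    (triangleInsert G u a b c).Adj (Sum.inl v) (Sum.inr i) ↔ (v : V) = att a b c i := by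
  constructor
  · rintro ⟨hne, h | h⟩ <;>
      rcases h with (⟨v', w', h1, h2, h3⟩ | ⟨v', h1, h⟩ | ⟨i', j', h1, h2⟩) <;>
      simp_all only [Sum.inl.injEq, Sum.inr.injEq, reduceCtorEq, and_false, false_and, or_self,
        false_or, exists_const] <;>
    · rcases h with ⟨h1, h2⟩ | ⟨h1, h2⟩ | ⟨h1, h2⟩ <;> subst h1 <;> simp [att, h2]
  · intro h
    refine ⟨by simp, Or.inl (Or.inr (Or.inl ⟨v, rfl, ?_⟩))⟩
    fin_cases i <;> simp_all [att]

lemma ti_adj_inr_inl {v : {v : V // v ≠ u}} {i : Fin 3} :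
    (triangleInsert G u a b c).Adj (Sum.inr i) (Sum.inl v) ↔ (v : V) = att a b c i := by
  rw [adj_comm]; exact ti_adj_inl_inr

lemma ti_adj_inr_inr {i j : Fin 3} :
    (triangleInsert G u a b c).Adj (Sum.inr i) (Sum.inr j) ↔ i ≠ j := by
  constructor
  · rintro ⟨hne, -⟩
    simpa using hne
  · intro h
    exact ⟨by simpa using h, Or.inl (Or.inr (Or.inr ⟨i, j, rfl, rfl⟩))⟩

end adj

lemma induce_adj_iff {W : Type*} {H : SimpleGraph W} {s : Set W} {x y : ↥s} :
    (H.induce s).Adj x y ↔ H.Adj ↑x ↑y := by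
  simp [SimpleGraph.induce]

/-- If `G` is a brick and `u` is a vertex of degree 3 in `G` with
neighbors `a`, `b`, `c`, then the triangle-insertion `G⟨u⟩` is also a brick. -/
theorem stmt0 {V : Type*} [Fintype V] [DecidableEq V] (G : SimpleGraph V)
    (u a b c : V) (hab : a ≠ b) (hac : a ≠ c) (hbc : b ≠ c)
    (hN : G.neighborSet u = {a, b, c})
    (hG : IsBrick G) :
    IsBrick (triangleInsert G u a b c) := by
  classical
  obtain ⟨⟨hcard, hconn⟩, hpm⟩ := hG
  have adj_u_iff : ∀ v : V, G.Adj u v ↔ v = a ∨ v = b ∨ v = c := by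
    intro v
    rw [← SimpleGraph.mem_neighborSet, hN]
    simp
  have hu_att : ∀ i : Fin 3, G.Adj u (att a b c i) := by
    intro i
    fin_cases i <;> simp [att, adj_u_iff]
  have att_ne_u : ∀ i : Fin 3, att a b c i ≠ u := fun i => (hu_att i).ne'
  have att_inj : ∀ i j : Fin 3, att a b c i = att a b c j → i = j := by
    intro i j
    fin_cases i <;> fin_cases j <;> simp_all [att] <;> intro h <;>
      first | rfl | (exact absurd h (by assumption)) | (exact absurd h.symm (by assumption))
  have adj_u_att : ∀ v : V, G.Adj u v → ∃ i : Fin 3, v = att a b c i := by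
    intro v hv
    rcases (adj_u_iff v).mp hv with h | h | h
    exacts [⟨0, by simp [att, h]⟩, ⟨1, by simp [att, h]⟩, ⟨2, by simp [att, h]⟩]
  set H := triangleInsert G u a b c with hHdef
  -- `lift` sends a vertex of `V` distinct from `u` to the corresponding vertex of `G⟨u⟩`
  set lift : V → ({v : V // v ≠ u} ⊕ Fin 3) := fun x =>
    if h : x = u then Sum.inr 0 else Sum.inl ⟨x, h⟩ with hliftdef
  have lift_ne : ∀ (x : V) (h : x ≠ u), lift x = Sum.inl ⟨x, h⟩ := by
    intro x h; simp [hliftdef, h]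
  constructor
  · constructor
    · -- at least 4 vertices
      have h1 : Fintype.card ({v : V // v ≠ u} ⊕ Fin 3) =
          Fintype.card {v : V // v ≠ u} + 3 := by
        rw [Fintype.card_sum, Fintype.card_fin]
      have h2 : Fintype.card {v : V // v ≠ u} = Fintype.card V - 1 := by
        have := Fintype.card_subtype_compl (fun x : V => x = u)
        rw [Fintype.card_subtype_eq] at this
        exact this
      have h3 : 1 ≤ Fintype.card V := Fintype.card_pos_iff.mpr ⟨u⟩
      omega
    · -- connectivity after deleting at most two vertices
      intro s hs
      set P : Set V := {v : V | ∃ h : v ≠ u, (Sum.inl ⟨v, h⟩ : {v : V // v ≠ u} ⊕ Fin 3) ∈ s}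
        with hPdef
      have hPu : u ∉ P := by rintro ⟨h, -⟩; exact h rfl
      have hPmem : ∀ (v : V) (h : v ≠ u), v ∉ P →
          (Sum.inl ⟨v, h⟩ : {v : V // v ≠ u} ⊕ Fin 3) ∈ sᶜ := by
        intro v h hv hmem
        exact hv ⟨h, hmem⟩
      have card3 : ∀ x y z : ({v : V // v ≠ u} ⊕ Fin 3),
          x ∈ s → y ∈ s → z ∈ s → x ≠ y → x ≠ z → y ≠ z → False := by
        intro x y z hx hy hz hxy hxz hyz
        have hsub : ({x, y, z} : Set ({v : V // v ≠ u} ⊕ Fin 3)) ⊆ s := by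
          intro w hw
          rcases hw with rfl | rfl | rfl <;> assumption
        have h3 : ({x, y, z} : Set ({v : V // v ≠ u} ⊕ Fin 3)).ncard = 3 := by
          rw [Set.ncard_insert_of_notMem (by simp [hxy, hxz]) (Set.toFinite _),
            Set.ncard_insert_of_notMem (by simp [hyz]) (Set.toFinite _),
            Set.ncard_singleton]
        have := Set.ncard_le_ncard hsub (Set.toFinite s)
        omega
      rw [SimpleGraph.connected_iff]
      by_cases hA : ∀ i : Fin 3, (Sum.inr i : {v : V // v ≠ u} ⊕ Fin 3) ∉ s
      · -- no triangle vertex was deleted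
        have hP2 : P.ncard ≤ 2 := by
          refine le_trans (Set.ncard_le_ncard_of_injOn lift ?_ ?_ (Set.toFinite s)) hs
          · rintro v ⟨h, hmem⟩
            rw [lift_ne v h]
            exact hmem
          · rintro v ⟨hv, -⟩ w ⟨hw, -⟩ e
            rw [lift_ne v hv, lift_ne w hw, Sum.inl.injEq] at e
            exact congrArg Subtype.val e
        have hPc := hconn P hP2
        have hPu' : u ∈ (Pᶜ : Set V) := hPu
        have hA0 : (Sum.inr 0 : {v : V // v ≠ u} ⊕ Fin 3) ∈ sᶜ := hA 0
        -- from a vertex with a walk to `u`, reach a triangle vertex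
        have aux : ∀ (x z : ↥(Pᶜ : Set V)) (w : (G.induce (Pᶜ : Set V)).Walk x z)
            (hzu : (z : V) = u)
            (hxu : (x : V) ≠ u) (hxs : (Sum.inl ⟨(x : V), hxu⟩ :
              {v : V // v ≠ u} ⊕ Fin 3) ∈ sᶜ),
            ∃ r : Fin 3, (H.induce (sᶜ : Set _)).Reachable ⟨Sum.inl ⟨(x : V), hxu⟩, hxs⟩
              ⟨Sum.inr r, hA r⟩ := by
          intro x z w
          induction w with
          | nil => intro hzu hxu hxs; exact absurd hzu hxu
          | @cons x y _ hadj wtail ih =>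
            intro hzu hxu hxs
            have hadjG : G.Adj (x : V) (y : V) := induce_adj_iff.mp hadj
            by_cases hyu : (y : V) = u
            · obtain ⟨r, hr⟩ := adj_u_att (x : V) (by rw [← hyu]; exact hadjG.symm)
              exact ⟨r, SimpleGraph.Adj.reachable (induce_adj_iff.mpr
                (by rw [hHdef, ti_adj_inl_inr]; exact hr))⟩
            · have hys := hPmem (y : V) hyu y.2
              obtain ⟨r, hreach⟩ := ih hzu hyu hys
              refine ⟨r, SimpleGraph.Reachable.trans (SimpleGraph.Adj.reachable
                (induce_adj_iff.mpr ?_)) hreach⟩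
              rw [hHdef, ti_adj_inl_inl]
              exact hadjG
        have main : ∀ w : ↥(sᶜ : Set ({v : V // v ≠ u} ⊕ Fin 3)),
            (H.induce (sᶜ : Set _)).Reachable w ⟨Sum.inr 0, hA0⟩ := by
          rintro ⟨v | i, hw⟩
          · have hvP : (v : V) ∉ P := by
              rintro ⟨h, hmem⟩
              apply hw
              have : (⟨(v : V), h⟩ : {v : V // v ≠ u}) = v := Subtype.ext rfl
              rwa [this] at hmem
            obtain ⟨wlk⟩ := hPc.preconnected ⟨(v : V), hvP⟩ ⟨u, hPu'⟩
            have hw' : (Sum.inl ⟨(v : V), v.2⟩ : {v : V // v ≠ u} ⊕ Fin 3) ∈ sᶜ := by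
              have : (⟨(v : V), v.2⟩ : {v : V // v ≠ u}) = v := Subtype.ext rfl
              rw [this]
              exact hw
            obtain ⟨r, hreach⟩ := aux ⟨(v : V), hvP⟩ ⟨u, hPu'⟩ wlk rfl v.2 hw'
            have e1 : (⟨Sum.inl ⟨(v : V), v.2⟩, hw'⟩ : ↥(sᶜ : Set _)) = ⟨Sum.inl v, hw⟩ := by
              apply Subtype.ext
              exact congrArg Sum.inl (Subtype.ext rfl)
            rw [e1] at hreach
            refine hreach.trans ?_
            by_cases hr0 : r = 0
            · subst hr0; exact SimpleGraph.Reachable.refl _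
            · exact SimpleGraph.Adj.reachable (induce_adj_iff.mpr
                (by rw [hHdef, ti_adj_inr_inr]; exact hr0))
          · by_cases hi0 : i = 0
            · subst hi0; exact SimpleGraph.Reachable.refl _
            · exact SimpleGraph.Adj.reachable (induce_adj_iff.mpr
                (by rw [hHdef, ti_adj_inr_inr]; exact hi0))
        exact ⟨fun w1 w2 => (main w1).trans (main w2).symm, ⟨⟨Sum.inr 0, hA0⟩⟩⟩
      · -- some triangle vertex was deleted
        push_neg at hA
        obtain ⟨i0, hi0⟩ := hA
        set Q : Set V := insert u P with hQdef
        have hQ2 : Q.ncard ≤ 2 := by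
          refine le_trans (Set.ncard_le_ncard_of_injOn
            (fun v => if v = u then Sum.inr i0 else lift v) ?_ ?_ (Set.toFinite s)) hs
          · rintro v (rfl | ⟨h, hmem⟩)
            · rw [if_pos rfl]; exact hi0
            · rw [if_neg h, lift_ne v h]; exact hmem
          · rintro v hv w hw e
            dsimp only at e
            by_cases hvu : v = u <;> by_cases hwu : w = u
            · rw [hvu, hwu]
            · rw [if_pos hvu, if_neg hwu, lift_ne w hwu] at e; exact absurd e (by simp)
            · rw [if_neg hvu, if_pos hwu, lift_ne v hvu] at e; exact absurd e (by simp)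
            · rw [if_neg hvu, if_neg hwu, lift_ne v hvu, lift_ne w hwu, Sum.inl.injEq] at e
              exact congrArg Subtype.val e
        have hQc := hconn Q hQ2
        have hQne : (Qᶜ : Set V).Nonempty := by
          rw [Set.nonempty_iff_ne_empty]
          intro he
          have : Q = Set.univ := by
            rw [← compl_compl Q, he, Set.compl_empty]
          rw [this, Set.ncard_univ] at hQ2
          have : Fintype.card V = Nat.card V := (Nat.card_eq_fintype_card).symm
          omega
        obtain ⟨v₀, hv₀⟩ := hQne
        have hv₀u : v₀ ≠ u := fun e => hv₀ (by rw [e]; exact Set.mem_insert _ _)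
        have hv₀P : v₀ ∉ P := fun h => hv₀ (Set.mem_insert_of_mem _ h)
        have hv₀s := hPmem v₀ hv₀u hv₀P
        -- the homomorphism from G - Q into the insertion minus s
        have memQ : ∀ x : ↥(Qᶜ : Set V), (x : V) ≠ u :=
          fun x e => x.2 (by rw [e]; exact Set.mem_insert _ _)
        have memQ' : ∀ x : ↥(Qᶜ : Set V),
            (Sum.inl ⟨(x : V), memQ x⟩ : {v : V // v ≠ u} ⊕ Fin 3) ∈ sᶜ :=
          fun x => hPmem _ (memQ x) (fun h => x.2 (Set.mem_insert_of_mem _ h))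
        let φ : G.induce (Qᶜ : Set V) →g H.induce (sᶜ : Set ({v : V // v ≠ u} ⊕ Fin 3)) :=
          { toFun := fun x => ⟨Sum.inl ⟨(x : V), memQ x⟩, memQ' x⟩
            map_rel' := fun h => induce_adj_iff.mpr
              (by rw [hHdef, ti_adj_inl_inl]; exact induce_adj_iff.mp h) }
        set hub : ↥(sᶜ : Set ({v : V // v ≠ u} ⊕ Fin 3)) := ⟨Sum.inl ⟨v₀, hv₀u⟩, hv₀s⟩
          with hhubdef
        have reach_inl : ∀ (v : V) (hvu : v ≠ u)
            (hvs : (Sum.inl ⟨v, hvu⟩ : {v : V // v ≠ u} ⊕ Fin 3) ∈ sᶜ),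
            (H.induce (sᶜ : Set _)).Reachable ⟨Sum.inl ⟨v, hvu⟩, hvs⟩ hub := by
          intro v hvu hvs
          have hvP : v ∉ P := fun ⟨h, hmem⟩ => hvs hmem
          have hvQ : v ∈ (Qᶜ : Set V) := by
            intro hmem
            rcases hmem with rfl | hmem
            exacts [hvu rfl, hvP hmem]
          have := (hQc.preconnected ⟨v, hvQ⟩ ⟨v₀, hv₀⟩).map φ
          exact this
        have main : ∀ w : ↥(sᶜ : Set ({v : V // v ≠ u} ⊕ Fin 3)),
            (H.induce (sᶜ : Set _)).Reachable w hub := by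
          rintro ⟨v | r, hw⟩
          · have e1 : (⟨Sum.inl ⟨(v : V), v.2⟩, by
                have : (⟨(v : V), v.2⟩ : {v : V // v ≠ u}) = v := Subtype.ext rfl
                rw [this]; exact hw⟩ : ↥(sᶜ : Set _)) = ⟨Sum.inl v, hw⟩ := by
              apply Subtype.ext
              exact congrArg Sum.inl (Subtype.ext rfl)
            rw [← e1]
            exact reach_inl (v : V) v.2 _
          · -- a surviving triangle vertex
            have hri0 : r ≠ i0 := fun e => hw (by rw [e]; exact hi0)
            have step_att : ∀ (hatt : (Sum.inl ⟨att a b c r, att_ne_u r⟩ :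
                {v : V // v ≠ u} ⊕ Fin 3) ∈ sᶜ),
                (H.induce (sᶜ : Set _)).Reachable ⟨Sum.inr r, hw⟩ hub := by
              intro hatt
              refine (SimpleGraph.Adj.reachable (induce_adj_iff.mpr ?_)).trans
                (reach_inl _ (att_ne_u r) hatt)
              rw [hHdef, ti_adj_inr_inl]
            by_cases hattr : (Sum.inl ⟨att a b c r, att_ne_u r⟩ :
                {v : V // v ≠ u} ⊕ Fin 3) ∈ s
            · -- the attachment of r was deleted; go through the other triangle vertex
              set r' := other r i0 with hr'def
              have hr'r : r' ≠ r := other_ne_left hri0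
              have hr'i0 : r' ≠ i0 := other_ne_right hri0
              have hr's : (Sum.inr r' : {v : V // v ≠ u} ⊕ Fin 3) ∉ s := by
                intro hmem
                exact card3 (Sum.inr i0) (Sum.inr r')
                  (Sum.inl ⟨att a b c r, att_ne_u r⟩) hi0 hmem hattr
                  (by simp [Sum.inr.injEq]; exact fun e => hr'i0 e.symm)
                  (by simp) (by simp)
              have hattr' : (Sum.inl ⟨att a b c r', att_ne_u r'⟩ :
                  {v : V // v ≠ u} ⊕ Fin 3) ∈ sᶜ := by
                intro hmem
                refine card3 (Sum.inr i0) (Sum.inl ⟨att a b c r, att_ne_u r⟩)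
                  (Sum.inl ⟨att a b c r', att_ne_u r'⟩) hi0 hattr hmem
                  (by simp) (by simp) ?_
                simp only [ne_eq, Sum.inl.injEq]
                intro e
                exact hr'r (att_inj r r' (congrArg Subtype.val e)).symm
              refine (SimpleGraph.Adj.reachable ((induce_adj_iff (x := ⟨Sum.inr r, hw⟩)
                (y := ⟨Sum.inr r', hr's⟩)).mpr ?_)).trans ?_
              · rw [hHdef, ti_adj_inr_inr]
                exact fun e => hr'r e.symm
              · refine (SimpleGraph.Adj.reachable (induce_adj_iff.mpr ?_)).trans
                  (reach_inl _ (att_ne_u r') hattr')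
                rw [hHdef, ti_adj_inr_inl]
            · exact step_att hattr
        exact ⟨fun w1 w2 => (main w1).trans (main w2).symm, ⟨hub⟩⟩
  · -- perfect matchings after deleting two vertices
    have key : ∀ (p : {v : V // v ≠ u}) (i : Fin 3),
        ∃ M : (H.induce {w | w ≠ Sum.inl p ∧ w ≠ Sum.inr i}).Subgraph, M.IsPerfectMatching := by
      intro p i
      obtain ⟨M, hM⟩ := hpm u (p : V) (Ne.symm p.2)
      obtain ⟨f, hf⟩ := fun_of_pm G _ M hM
      set g : ({v : V // v ≠ u} ⊕ Fin 3) → ({v : V // v ≠ u} ⊕ Fin 3) := fun w => Sum.rec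
        (fun v => lift (f (v : V)))
        (fun r => Sum.inr (other r i)) w with hgdef
      have g_inl : ∀ v : {v : V // v ≠ u}, g (Sum.inl v) = lift (f (v : V)) := fun _ => rfl
      have g_inr : ∀ r : Fin 3, g (Sum.inr r) = Sum.inr (other r i) := fun _ => rfl
      apply pm_of_fun H _ g
      rintro (v | r) hw
      · have hvp : (v : V) ≠ (p : V) := fun e => hw.1 (by rw [Sum.inl.injEq]; exact Subtype.ext e)
        obtain ⟨hfv_mem, hffv, hadj_v⟩ := hf (v : V) ⟨v.2, hvp⟩
        rw [g_inl, lift_ne _ hfv_mem.1]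
        refine ⟨⟨?_, by simp⟩, ?_, ?_⟩
        · intro e
          rw [Sum.inl.injEq] at e
          exact hfv_mem.2 (congrArg Subtype.val e)
        · rw [g_inl]
          show lift (f (f (v : V))) = Sum.inl v
          rw [hffv, lift_ne _ v.2]
        · show H.Adj (Sum.inl v) (Sum.inl ⟨f (v : V), hfv_mem.1⟩)
          rw [hHdef, ti_adj_inl_inl]
          exact hadj_v
      · have hri : r ≠ i := fun e => hw.2 (by rw [e])
        rw [g_inr]
        refine ⟨⟨by simp, ?_⟩, ?_, ?_⟩
        · intro e
          rw [Sum.inr.injEq] at e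
          exact other_ne_right hri e
        · rw [g_inr, other_other hri]
        · show H.Adj (Sum.inr r) (Sum.inr (other r i))
          rw [hHdef, ti_adj_inr_inr]
          exact (other_ne_left hri).symm
    rintro (p | i) (q | j) hXY
    · -- both original vertices
      have hpq : (p : V) ≠ (q : V) := fun e => hXY (by rw [Sum.inl.injEq]; exact Subtype.ext e)
      obtain ⟨M, hM⟩ := hpm (p : V) (q : V) hpq
      obtain ⟨f, hf⟩ := fun_of_pm G _ M hM
      have hu_mem : u ∈ {v : V | v ≠ (p : V) ∧ v ≠ (q : V)} := ⟨Ne.symm p.2, Ne.symm q.2⟩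
      obtain ⟨hm_mem, hffu, hadj_um⟩ := hf u hu_mem
      set m := f u with hmdef
      have hm_ne_u : m ≠ u := hadj_um.ne'
      obtain ⟨t, htm⟩ := adj_u_att m hadj_um
      set g : ({v : V // v ≠ u} ⊕ Fin 3) → ({v : V // v ≠ u} ⊕ Fin 3) := fun w => Sum.rec
        (fun v => if (v : V) = m then Sum.inr t else lift (f (v : V)))
        (fun i => if i = t then lift m else Sum.inr (other i t)) w with hgdef
      have g_inl : ∀ v : {v : V // v ≠ u},
          g (Sum.inl v) = if (v : V) = m then Sum.inr t else lift (f (v : V)) := fun _ => rfl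
      have g_inr : ∀ i : Fin 3,
          g (Sum.inr i) = if i = t then lift m else Sum.inr (other i t) := fun _ => rfl
      apply pm_of_fun H _ g
      rintro (v | i) hw
      · -- an original vertex v, distinct from p, q, u
        have hvp : (v : V) ≠ (p : V) := fun e => hw.1 (by rw [Sum.inl.injEq]; exact Subtype.ext e)
        have hvq : (v : V) ≠ (q : V) := fun e => hw.2 (by rw [Sum.inl.injEq]; exact Subtype.ext e)
        obtain ⟨hfv_mem, hffv, hadj_v⟩ := hf (v : V) ⟨hvp, hvq⟩
        by_cases hvm : (v : V) = m
        · rw [g_inl, if_pos hvm]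
          refine ⟨⟨by simp, by simp⟩, ?_, ?_⟩
          · rw [g_inr, if_pos rfl, lift_ne m hm_ne_u]
            exact congrArg Sum.inl (Subtype.ext hvm.symm)
          · show H.Adj (Sum.inl v) (Sum.inr t)
            rw [hHdef, ti_adj_inl_inr, hvm, htm]
        · rw [g_inl, if_neg hvm]
          have hfv_ne_u : f (v : V) ≠ u := by
            intro e
            apply hvm
            calc (v : V) = f (f (v : V)) := hffv.symm
              _ = f u := by rw [e]
              _ = m := hmdef.symm
          rw [lift_ne _ hfv_ne_u]
          have hne : f (v : V) ≠ m := by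
            intro e
            apply v.2
            calc (v : V) = f (f (v : V)) := hffv.symm
              _ = f m := by rw [e]
              _ = u := hffu
          refine ⟨⟨?_, ?_⟩, ?_, ?_⟩
          · intro e
            rw [Sum.inl.injEq] at e
            exact hfv_mem.1 (congrArg Subtype.val e)
          · intro e
            rw [Sum.inl.injEq] at e
            exact hfv_mem.2 (congrArg Subtype.val e)
          · rw [g_inl]
            show (if (f (v : V) : V) = m then _ else lift (f (f (v : V)))) = Sum.inl v
            rw [if_neg hne, hffv, lift_ne _ v.2]
          · show H.Adj (Sum.inl v) (Sum.inl ⟨f (v : V), hfv_ne_u⟩)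
            rw [hHdef, ti_adj_inl_inl]
            exact hadj_v
      · -- a triangle vertex
        by_cases hit : i = t
        · subst hit
          rw [g_inr, if_pos rfl, lift_ne m hm_ne_u]
          refine ⟨⟨?_, ?_⟩, ?_, ?_⟩
          · intro e
            rw [Sum.inl.injEq] at e
            exact hm_mem.1 (congrArg Subtype.val e)
          · intro e
            rw [Sum.inl.injEq] at e
            exact hm_mem.2 (congrArg Subtype.val e)
          · rw [g_inl, if_pos rfl]
          · show H.Adj (Sum.inr i) (Sum.inl ⟨m, hm_ne_u⟩)
            rw [hHdef, ti_adj_inr_inl]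
            exact htm
        · rw [g_inr, if_neg hit]
          refine ⟨⟨by simp, by simp⟩, ?_, ?_⟩
          · rw [g_inr, if_neg (other_ne_right hit), other_other hit]
          · show H.Adj (Sum.inr i) (Sum.inr (other i t))
            rw [hHdef, ti_adj_inr_inr]
            exact (other_ne_left hit).symm
    · -- original vertex and triangle vertex
      exact key p j
    · -- triangle vertex and original vertex
      have hswap : {w : ({v : V // v ≠ u} ⊕ Fin 3) | w ≠ Sum.inr i ∧ w ≠ Sum.inl q} =
          {w | w ≠ Sum.inl q ∧ w ≠ Sum.inr i} := by
        ext w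
        exact and_comm
      rw [hswap]
      exact key q i
    · -- two triangle vertices
      have hij : i ≠ j := fun e => hXY (by rw [e])
      set k := other i j with hkdef
      set mk := att a b c k with hmkdef
      obtain ⟨M, hM⟩ := hpm u mk (Ne.symm (att_ne_u k))
      obtain ⟨f, hf⟩ := fun_of_pm G _ M hM
      have hmk_ne_u : mk ≠ u := att_ne_u k
      set g : ({v : V // v ≠ u} ⊕ Fin 3) → ({v : V // v ≠ u} ⊕ Fin 3) := fun w => Sum.rec
        (fun v => if (v : V) = mk then Sum.inr k else lift (f (v : V)))
        (fun _ => lift mk) w with hgdef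
      have g_inl : ∀ v : {v : V // v ≠ u},
          g (Sum.inl v) = if (v : V) = mk then Sum.inr k else lift (f (v : V)) := fun _ => rfl
      have g_inr : ∀ r : Fin 3, g (Sum.inr r) = lift mk := fun _ => rfl
      apply pm_of_fun H _ g
      rintro (v | r) hw
      · by_cases hvmk : (v : V) = mk
        · rw [g_inl, if_pos hvmk]
          refine ⟨⟨?_, ?_⟩, ?_, ?_⟩
          · intro e
            rw [Sum.inr.injEq] at e
            exact other_ne_left hij e
          · intro e
            rw [Sum.inr.injEq] at e
            exact other_ne_right hij e
          · show g (Sum.inr k) = Sum.inl v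
            rw [g_inr k, lift_ne mk hmk_ne_u]
            exact congrArg Sum.inl (Subtype.ext hvmk.symm)
          · show H.Adj (Sum.inl v) (Sum.inr k)
            rw [hHdef, ti_adj_inl_inr]
            exact hvmk
        · obtain ⟨hfv_mem, hffv, hadj_v⟩ := hf (v : V) ⟨v.2, hvmk⟩
          rw [g_inl, if_neg hvmk, lift_ne _ hfv_mem.1]
          refine ⟨⟨by simp, by simp⟩, ?_, ?_⟩
          · rw [g_inl]
            show (if (f (v : V) : V) = mk then _ else lift (f (f (v : V)))) = Sum.inl v
            rw [if_neg hfv_mem.2, hffv, lift_ne _ v.2]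
          · show H.Adj (Sum.inl v) (Sum.inl ⟨f (v : V), hfv_mem.1⟩)
            rw [hHdef, ti_adj_inl_inl]
            exact hadj_v
      · have hri : r ≠ i := fun e => hw.1 (by rw [e])
        have hrj : r ≠ j := fun e => hw.2 (by rw [e])
        have hrk : r = k := eq_other hij hri hrj
        rw [g_inr r, lift_ne mk hmk_ne_u]
        refine ⟨⟨by simp, by simp⟩, ?_, ?_⟩
        · rw [g_inl, if_pos rfl, hrk]
        · show H.Adj (Sum.inr r) (Sum.inl ⟨mk, hmk_ne_u⟩)
          rw [hHdef, ti_adj_inr_inl, hrk]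
end

section
/- The graph G_0, obtained from the wheel W_5 (with hub u and rim cycle v_1 v_2 v_3 v_4 v_5) by performing triangle-insertions at the four rim vertices v_1, v_2, v_3, v_4, is a brick on 14 vertices with 22 edges. -/
open SimpleGraph

/-- The graph `G₀` obtained from the wheel `W₅` (hub `u`, rim `v₁ v₂ v₃ v₄ v₅`) by
triangle-insertions at the four rim vertices `v₁, v₂, v₃, v₄`.
Labels: `0` is the hub `u`, `1` is the remaining rim vertex `v₅`, and for
`i = 1, 2, 3, 4` the `i`-th inserted triangle has vertices `3i - 1, 3i, 3i + 1`,
where `3i - 1` is adjacent to the hub, and the rim connections are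
`1–3, 4–6, 7–9, 10–12, 13–1`. -/
def G0 : SimpleGraph (Fin 14) :=
  SimpleGraph.fromEdgeSet
    {s(0, 1), s(0, 2), s(0, 5), s(0, 8), s(0, 11),
     s(2, 3), s(3, 4), s(2, 4),
     s(5, 6), s(6, 7), s(5, 7),
     s(8, 9), s(9, 10), s(8, 10),
     s(11, 12), s(12, 13), s(11, 13),
     s(1, 3), s(4, 6), s(7, 9), s(10, 12), s(13, 1)}

def Pdat : List (List (List Nat)) :=
[[[0, 0, 0, 0, 0, 0, 0, 0, 0, 0, 0, 0, 0, 0], [2, 3, 2, 2, 2, 6, 4, 6, 9, 7, 9, 12, 10, 12], [1, 1, 3, 1, 3, 6, 4, 6, 10, 10, 12, 13, 13, 1], [1, 1, 4, 1, 6, 7, 7, 9, 10, 10, 12, 13, 13, 1], [1, 1, 3, 1, 2, 7, 7, 9, 10, 10, 12, 13, 13, 1], [1, 1, 3, 1, 3, 6, 4, 6, 10, 10, 12, 13, 13, 1], [1, 1, 3, 1, 3, 7, 4, 9, 10, 10, 12, 13, 13, 1], [1, 1, 3, 1, 3, 6, 4, 9, 10, 10, 12, 13, 13, 1], [1, 1,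 3, 1, 3, 6, 4, 6, 9, 10, 12, 13, 13, 1], [1, 1, 3, 1, 3, 6, 4, 6, 10, 8, 12, 13, 13, 1], [1, 1, 3, 1, 3, 6, 4, 6, 9, 7, 8, 13, 13, 1], [1, 1, 3, 1, 3, 6, 4, 6, 10, 10, 12, 12, 13, 1], [1, 1, 3, 1, 3, 6, 4, 6, 9, 7, 9, 13, 10, 1], [1, 1, 3, 1, 3, 6, 4, 6, 9, 7, 9, 12, 10, 1]],
 [[2, 3, 2, 2, 2, 6, 4, 6, 9, 7, 9, 12, 10, 12], [0, 0, 0, 0, 0, 0, 0, 0, 0, 0, 0, 0, 0, 0], [0, 0, 0, 4, 6, 0, 5, 5, 0, 8, 8, 0, 11, 11], [0, 0, 0, 2, 2, 0, 5, 5, 0, 8, 8, 0, 11, 11], [0, 0, 0, 2, 2, 0, 5, 5, 0, 8, 8, 0, 11, 11], [0, 0, 0, 2, 2, 0, 4, 9, 0, 8, 8, 0, 11, 11], [0, 0, 0, 2, 2, 0, 4, 5, 0, 8, 8, 0, 11, 11], [0, 0, 0, 2, 2, 0, 5, 9, 0, 8, 8, 0, 11, 11], [0, 0, 0, 2, 2,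 0, 5, 5, 0, 7, 12, 0, 11, 11], [0, 0, 0, 2, 2, 0, 5, 5, 0, 8, 8, 0, 11, 11], [0, 0, 0, 2, 2, 0, 5, 5, 0, 8, 8, 0, 11, 11], [0, 0, 0, 2, 2, 0, 5, 5, 0, 8, 8, 0, 10, 12], [0, 0, 0, 2, 2, 0, 5, 5, 0, 8, 8, 0, 10, 11], [0, 0, 0, 2, 2, 0, 5, 5, 0, 8, 8, 0, 11, 11]],
 [[1, 1, 3, 1, 3, 6, 4, 6, 10, 10, 12, 13, 13, 1], [0, 0, 0, 4, 6, 0, 5, 5, 0, 8, 8, 0, 11, 11], [0, 0, 0, 0, 0, 0, 0, 0, 0, 0, 0, 0, 0, 0], [0, 0, 0, 1, 6, 0, 5, 5, 0, 8, 8, 0, 11, 1], [0, 0, 0, 1, 3, 0, 5, 5, 0, 8, 8, 0, 11, 1], [0, 0, 0, 1, 3, 0, 4, 9, 0, 8, 8, 0, 11, 1], [0, 0, 0, 1, 3, 0, 4, 5, 0, 8, 8, 0, 11, 1], [0, 0, 0, 1, 3, 0, 5, 9, 0, 8, 8, 0, 11, 1], [0, 0, 0, 1, 3, 0, 5, 5,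 0, 7, 12, 0, 11, 1], [0, 0, 0, 1, 3, 0, 5, 5, 0, 8, 8, 0, 11, 1], [0, 0, 0, 1, 3, 0, 5, 5, 0, 8, 8, 0, 11, 1], [0, 0, 0, 1, 3, 0, 5, 5, 0, 8, 8, 0, 13, 1], [0, 0, 0, 1, 3, 0, 5, 5, 0, 8, 8, 0, 10, 1], [0, 0, 0, 1, 3, 0, 5, 5, 0, 8, 8, 0, 11, 1]],
 [[1, 1, 4, 1, 6, 7, 7, 9, 10, 10, 12, 13, 13, 1], [0, 0, 0, 2, 2, 0, 5, 5, 0, 8, 8, 0, 11, 11], [0, 0, 0, 1, 6, 0, 5, 5, 0, 8, 8, 0, 11, 1], [0, 0, 0, 0, 0, 0, 0, 0, 0, 0, 0, 0, 0, 0], [0, 0, 0, 1, 2, 0, 5, 5, 0, 8, 8, 0, 11, 1], [0, 0, 0, 1, 2, 0, 4, 9, 0, 8, 8, 0, 11, 1], [0, 0, 0, 1, 2, 0, 4, 5, 0, 8, 8, 0, 11, 1], [0, 0, 0, 1, 2, 0, 5, 9, 0, 8, 8, 0, 11, 1], [0, 0, 0, 1, 2, 0, 5, 5, 0, 7, 12,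 0, 11, 1], [0, 0, 0, 1, 2, 0, 5, 5, 0, 8, 8, 0, 11, 1], [0, 0, 0, 1, 2, 0, 5, 5, 0, 8, 8, 0, 11, 1], [0, 0, 0, 1, 2, 0, 5, 5, 0, 8, 8, 0, 13, 1], [0, 0, 0, 1, 2, 0, 5, 5, 0, 8, 8, 0, 10, 1], [0, 0, 0, 1, 2, 0, 5, 5, 0, 8, 8, 0, 11, 1]],
 [[1, 1, 3, 1, 2, 7, 7, 9, 10, 10, 12, 13, 13, 1], [0, 0, 0, 2, 2, 0, 5, 5, 0, 8, 8, 0, 11, 11], [0, 0, 0, 1, 3, 0, 5, 5, 0, 8, 8, 0, 11, 1], [0, 0, 0, 1, 2, 0, 5, 5, 0, 8, 8, 0, 11, 1], [0, 0, 0, 0, 0, 0, 0, 0, 0, 0, 0, 0, 0, 0], [0, 0, 0, 1, 2, 0, 7, 9, 0, 8, 8, 0, 11, 1], [0, 0, 0, 1, 2, 0, 5, 5, 0, 8, 8, 0, 11, 1], [0, 0, 0, 1, 2, 0, 5, 9, 0, 8, 8, 0, 11, 1], [0, 0, 0, 1, 2, 0, 5, 5, 0, 7, 12, 0, 11, 1],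 [0, 0, 0, 1, 2, 0, 5, 5, 0, 8, 8, 0, 11, 1], [0, 0, 0, 1, 2, 0, 5, 5, 0, 8, 8, 0, 11, 1], [0, 0, 0, 1, 2, 0, 5, 5, 0, 8, 8, 0, 13, 1], [0, 0, 0, 1, 2, 0, 5, 5, 0, 8, 8, 0, 10, 1], [0, 0, 0, 1, 2, 0, 5, 5, 0, 8, 8, 0, 11, 1]],
 [[1, 1, 3, 1, 3, 6, 4, 6, 10, 10, 12, 13, 13, 1], [0, 0, 0, 2, 2, 0, 4, 9, 0, 8, 8, 0, 11, 11], [0, 0, 0, 1, 3, 0, 4, 9, 0, 8, 8, 0, 11, 1], [0, 0, 0, 1, 2, 0, 4, 9, 0, 8, 8, 0, 11, 1], [0, 0, 0, 1, 2, 0, 7, 9, 0, 8, 8, 0, 11, 1], [0, 0, 0, 0, 0, 0, 0, 0, 0, 0, 0, 0, 0, 0], [0, 0, 0, 1, 2, 0, 4, 9, 0, 8, 8, 0, 11, 1], [0, 0, 0, 1, 2, 0, 4, 9, 0, 8, 8, 0, 11, 1], [0, 0, 0, 1, 2, 0, 4, 6, 0, 10, 12, 0, 11, 1], [0, 0, 0,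 1, 2, 0, 4, 6, 0, 8, 8, 0, 11, 1], [0, 0, 0, 1, 2, 0, 4, 9, 0, 8, 8, 0, 11, 1], [0, 0, 0, 1, 2, 0, 4, 9, 0, 8, 8, 0, 13, 1], [0, 0, 0, 1, 2, 0, 4, 9, 0, 8, 8, 0, 10, 1], [0, 0, 0, 1, 2, 0, 4, 9, 0, 8, 8, 0, 11, 1]],
 [[1, 1, 3, 1, 3, 7, 4, 9, 10, 10, 12, 13, 13, 1], [0, 0, 0, 2, 2, 0, 4, 5, 0, 8, 8, 0, 11, 11], [0, 0, 0, 1, 3, 0, 4, 5, 0, 8, 8, 0, 11, 1], [0, 0, 0, 1, 2, 0, 4, 5, 0, 8, 8, 0, 11, 1], [0, 0, 0, 1, 2, 0, 5, 5, 0, 8, 8, 0, 11, 1], [0, 0, 0, 1, 2, 0, 4, 9, 0, 8, 8, 0, 11, 1], [0, 0, 0, 0, 0, 0, 0, 0, 0, 0, 0, 0, 0, 0], [0, 0, 0, 1, 2, 0, 4, 9, 0, 8, 8, 0, 11, 1], [0, 0, 0, 1, 2, 0, 4, 5, 0, 7, 12, 0, 11, 1], [0, 0, 0, 1, 2, 0,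 4, 5, 0, 8, 8, 0, 11, 1], [0, 0, 0, 1, 2, 0, 4, 5, 0, 8, 8, 0, 11, 1], [0, 0, 0, 1, 2, 0, 4, 5, 0, 8, 8, 0, 13, 1], [0, 0, 0, 1, 2, 0, 4, 5, 0, 8, 8, 0, 10, 1], [0, 0, 0, 1, 2, 0, 4, 5, 0, 8, 8, 0, 11, 1]],
 [[1, 1, 3, 1, 3, 6, 4, 9, 10, 10, 12, 13, 13, 1], [0, 0, 0, 2, 2, 0, 5, 9, 0, 8, 8, 0, 11, 11], [0, 0, 0, 1, 3, 0, 5, 9, 0, 8, 8, 0, 11, 1], [0, 0, 0, 1, 2, 0, 5, 9, 0, 8, 8, 0, 11, 1], [0, 0, 0, 1, 2, 0, 5, 9, 0, 8, 8, 0, 11, 1], [0, 0, 0, 1, 2, 0, 4, 9, 0, 8, 8, 0, 11, 1], [0, 0, 0, 1, 2, 0, 4, 9, 0, 8, 8, 0, 11, 1], [0, 0, 0, 0, 0, 0, 0, 0, 0, 0, 0, 0, 0, 0], [0, 0, 0, 1, 2, 0, 5, 9, 0, 10, 12, 0, 11, 1], [0, 0, 0, 1, 2, 0, 5, 5, 0,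 8, 8, 0, 11, 1], [0, 0, 0, 1, 2, 0, 5, 9, 0, 8, 8, 0, 11, 1], [0, 0, 0, 1, 2, 0, 5, 9, 0, 8, 8, 0, 13, 1], [0, 0, 0, 1, 2, 0, 5, 9, 0, 8, 8, 0, 10, 1], [0, 0, 0, 1, 2, 0, 5, 9, 0, 8, 8, 0, 11, 1]],
 [[1, 1, 3, 1, 3, 6, 4, 6, 9, 10, 12, 13, 13, 1], [0, 0, 0, 2, 2, 0, 5, 5, 0, 7, 12, 0, 11, 11], [0, 0, 0, 1, 3, 0, 5, 5, 0, 7, 12, 0, 11, 1], [0, 0, 0, 1, 2, 0, 5, 5, 0, 7, 12, 0, 11, 1], [0, 0, 0, 1, 2, 0, 5, 5, 0, 7, 12, 0, 11, 1], [0, 0, 0, 1, 2, 0, 4, 6, 0, 10, 12, 0, 11, 1], [0, 0, 0, 1, 2, 0, 4, 5, 0, 7, 12, 0, 11, 1], [0, 0, 0, 1, 2, 0, 5, 9, 0, 10, 12, 0, 11, 1], [0, 0, 0, 0, 0, 0, 0, 0, 0, 0, 0, 0, 0, 0], [0, 0, 0, 1, 2, 0, 5, 5, 0, 10, 12, 0,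 11, 1], [0, 0, 0, 1, 2, 0, 5, 5, 0, 7, 9, 0, 11, 1], [0, 0, 0, 1, 2, 0, 5, 5, 0, 7, 12, 0, 13, 1], [0, 0, 0, 1, 2, 0, 5, 5, 0, 7, 9, 0, 10, 1], [0, 0, 0, 1, 2, 0, 5, 5, 0, 7, 12, 0, 11, 1]],
 [[1, 1, 3, 1, 3, 6, 4, 6, 10, 8, 12, 13, 13, 1], [0, 0, 0, 2, 2, 0, 5, 5, 0, 8, 8, 0, 11, 11], [0, 0, 0, 1, 3, 0, 5, 5, 0, 8, 8, 0, 11, 1], [0, 0, 0, 1, 2, 0, 5, 5, 0, 8, 8, 0, 11, 1], [0, 0, 0, 1, 2, 0, 5, 5, 0, 8, 8, 0, 11, 1], [0, 0, 0, 1, 2, 0, 4, 6, 0, 8, 8, 0, 11, 1], [0, 0, 0, 1, 2, 0, 4, 5, 0, 8, 8, 0, 11, 1], [0, 0, 0, 1, 2, 0, 5, 5, 0, 8, 8, 0, 11, 1], [0, 0, 0, 1, 2, 0, 5, 5, 0, 10, 12, 0, 11, 1], [0, 0, 0, 0, 0, 0, 0, 0, 0, 0, 0, 0, 0, 0], [0,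 0, 0, 1, 2, 0, 5, 5, 0, 8, 8, 0, 11, 1], [0, 0, 0, 1, 2, 0, 5, 5, 0, 8, 8, 0, 13, 1], [0, 0, 0, 1, 2, 0, 5, 5, 0, 8, 8, 0, 10, 1], [0, 0, 0, 1, 2, 0, 5, 5, 0, 8, 8, 0, 11, 1]],
 [[1, 1, 3, 1, 3, 6, 4, 6, 9, 7, 8, 13, 13, 1], [0, 0, 0, 2, 2, 0, 5, 5, 0, 8, 8, 0, 11, 11], [0, 0, 0, 1, 3, 0, 5, 5, 0, 8, 8, 0, 11, 1], [0, 0, 0, 1, 2, 0, 5, 5, 0, 8, 8, 0, 11, 1], [0, 0, 0, 1, 2, 0, 5, 5, 0, 8, 8, 0, 11, 1], [0, 0, 0, 1, 2, 0, 4, 9, 0, 8, 8, 0, 11, 1], [0, 0, 0, 1, 2, 0, 4, 5, 0, 8, 8, 0, 11, 1], [0, 0, 0, 1, 2, 0, 5, 9, 0, 8, 8, 0, 11, 1], [0, 0, 0, 1, 2, 0, 5, 5, 0, 7, 9, 0, 11, 1], [0, 0, 0, 1, 2, 0, 5, 5, 0, 8, 8, 0, 11, 1], [0, 0, 0, 0,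 0, 0, 0, 0, 0, 0, 0, 0, 0, 0], [0, 0, 0, 1, 2, 0, 5, 5, 0, 8, 8, 0, 13, 1], [0, 0, 0, 1, 2, 0, 5, 5, 0, 8, 8, 0, 11, 1], [0, 0, 0, 1, 2, 0, 5, 5, 0, 8, 8, 0, 11, 1]],
 [[1, 1, 3, 1, 3, 6, 4, 6, 10, 10, 12, 12, 13, 1], [0, 0, 0, 2, 2, 0, 5, 5, 0, 8, 8, 0, 10, 12], [0, 0, 0, 1, 3, 0, 5, 5, 0, 8, 8, 0, 13, 1], [0, 0, 0, 1, 2, 0, 5, 5, 0, 8, 8, 0, 13, 1], [0, 0, 0, 1, 2, 0, 5, 5, 0, 8, 8, 0, 13, 1], [0, 0, 0, 1, 2, 0, 4, 9, 0, 8, 8, 0, 13, 1], [0, 0, 0, 1, 2, 0, 4, 5, 0, 8, 8, 0, 13, 1], [0, 0, 0, 1, 2, 0, 5, 9, 0, 8, 8, 0, 13, 1], [0, 0, 0, 1, 2, 0, 5, 5, 0, 7, 12, 0, 13, 1], [0, 0, 0, 1, 2, 0, 5, 5, 0, 8, 8, 0, 13, 1], [0, 0, 0, 1, 2, 0, 5,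 5, 0, 8, 8, 0, 13, 1], [0, 0, 0, 0, 0, 0, 0, 0, 0, 0, 0, 0, 0, 0], [0, 0, 0, 1, 2, 0, 5, 5, 0, 8, 8, 0, 10, 1], [0, 0, 0, 1, 2, 0, 5, 5, 0, 8, 8, 0, 10, 1]],
 [[1, 1, 3, 1, 3, 6, 4, 6, 9, 7, 9, 13, 10, 1], [0, 0, 0, 2, 2, 0, 5, 5, 0, 8, 8, 0, 10, 11], [0, 0, 0, 1, 3, 0, 5, 5, 0, 8, 8, 0, 10, 1], [0, 0, 0, 1, 2, 0, 5, 5, 0, 8, 8, 0, 10, 1], [0, 0, 0, 1, 2, 0, 5, 5, 0, 8, 8, 0, 10, 1], [0, 0, 0, 1, 2, 0, 4, 9, 0, 8, 8, 0, 10, 1], [0, 0, 0, 1, 2, 0, 4, 5, 0, 8, 8, 0, 10, 1], [0, 0, 0, 1, 2, 0, 5, 9, 0, 8, 8, 0, 10, 1], [0, 0, 0, 1, 2, 0, 5, 5, 0, 7, 9, 0, 10, 1], [0, 0, 0, 1, 2, 0, 5, 5, 0, 8, 8, 0, 10, 1], [0, 0, 0, 1, 2, 0, 5, 5, 0, 8,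 8, 0, 11, 1], [0, 0, 0, 1, 2, 0, 5, 5, 0, 8, 8, 0, 10, 1], [0, 0, 0, 0, 0, 0, 0, 0, 0, 0, 0, 0, 0, 0], [0, 0, 0, 1, 2, 0, 5, 5, 0, 8, 8, 0, 10, 1]],
 [[1, 1, 3, 1, 3, 6, 4, 6, 9, 7, 9, 12, 10, 1], [0, 0, 0, 2, 2, 0, 5, 5, 0, 8, 8, 0, 11, 11], [0, 0, 0, 1, 3, 0, 5, 5, 0, 8, 8, 0, 11, 1], [0, 0, 0, 1, 2, 0, 5, 5, 0, 8, 8, 0, 11, 1], [0, 0, 0, 1, 2, 0, 5, 5, 0, 8, 8, 0, 11, 1], [0, 0, 0, 1, 2, 0, 4, 9, 0, 8, 8, 0, 11, 1], [0, 0, 0, 1, 2, 0, 4, 5, 0, 8, 8, 0, 11, 1], [0, 0, 0, 1, 2, 0, 5, 9, 0, 8, 8, 0, 11, 1], [0, 0, 0, 1, 2, 0, 5, 5, 0, 7, 12, 0, 11, 1], [0, 0, 0, 1, 2, 0, 5, 5, 0, 8, 8, 0, 11, 1], [0, 0, 0, 1, 2, 0, 5, 5, 0, 8, 8, 0, 11,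 1], [0, 0, 0, 1, 2, 0, 5, 5, 0, 8, 8, 0, 10, 1], [0, 0, 0, 1, 2, 0, 5, 5, 0, 8, 8, 0, 10, 1], [0, 0, 0, 0, 0, 0, 0, 0, 0, 0, 0, 0, 0, 0]]]
def Ndat : List (List (List Nat)) :=
[[[0, 0, 0, 0, 0, 0, 0, 0, 0, 0, 0, 0, 0, 0], [100, 100, 0, 1, 1, 3, 2, 3, 5, 4, 5, 7, 6, 7], [100, 0, 100, 1, 2, 4, 3, 4, 4, 4, 3, 2, 2, 1], [100, 0, 8, 100, 7, 6, 6, 5, 4, 4, 3, 2, 2, 1], [100, 0, 2, 1, 100, 6, 6, 5, 4, 4, 3, 2, 2, 1], [100, 0, 2, 1, 2, 100, 3, 4, 4, 4, 3, 2, 2, 1], [100, 0, 2, 1, 2, 6, 100, 5, 4, 4, 3, 2, 2, 1], [100, 0, 2, 1, 2, 4, 3, 100, 4, 4, 3, 2, 2, 1], [100, 0, 2, 1, 2, 4, 3, 4, 100, 4, 3, 2, 2, 1], [100, 0, 2, 1, 2, 4, 3, 4, 4, 100, 3, 2, 2, 1], [100, 0, 2, 1, 2, 4, 3, 4, 6,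 5, 100, 2, 2, 1], [100, 0, 2, 1, 2, 4, 3, 4, 4, 4, 3, 100, 2, 1], [100, 0, 2, 1, 2, 4, 3, 4, 6, 5, 6, 2, 100, 1], [100, 0, 2, 1, 2, 4, 3, 4, 6, 5, 6, 8, 7, 100]],
 [[100, 100, 0, 1, 1, 3, 2, 3, 5, 4, 5, 7, 6, 7], [0, 0, 0, 0, 0, 0, 0, 0, 0, 0, 0, 0, 0, 0], [0, 100, 100, 4, 3, 1, 2, 2, 1, 2, 2, 1, 2, 2], [0, 100, 1, 100, 2, 1, 2, 2, 1, 2, 2, 1, 2, 2], [0, 100, 1, 2, 100, 1, 2, 2, 1, 2, 2, 1, 2, 2], [0, 100, 1, 2, 2, 100, 3, 3, 1, 2, 2, 1, 2, 2], [0, 100, 1, 2, 2, 1, 100, 2, 1, 2, 2, 1, 2, 2], [0, 100, 1, 2, 2, 1, 2, 100, 1, 2, 2, 1, 2, 2], [0, 100, 1, 2, 2, 1, 2, 2, 100, 3, 3, 1, 2, 2], [0, 100, 1, 2, 2, 1, 2, 2, 1, 100, 2, 1, 2, 2], [0, 100, 1, 2, 2, 1, 2, 2, 1, 2, 100, 1,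 2, 2], [0, 100, 1, 2, 2, 1, 2, 2, 1, 2, 2, 100, 3, 4], [0, 100, 1, 2, 2, 1, 2, 2, 1, 2, 2, 1, 100, 2], [0, 100, 1, 2, 2, 1, 2, 2, 1, 2, 2, 1, 2, 100]],
 [[100, 0, 100, 1, 2, 4, 3, 4, 4, 4, 3, 2, 2, 1], [0, 100, 100, 4, 3, 1, 2, 2, 1, 2, 2, 1, 2, 2], [0, 0, 0, 0, 0, 0, 0, 0, 0, 0, 0, 0, 0, 0], [0, 1, 100, 100, 3, 1, 2, 2, 1, 2, 2, 1, 2, 2], [0, 1, 100, 2, 100, 1, 2, 2, 1, 2, 2, 1, 2, 2], [0, 1, 100, 2, 3, 100, 4, 3, 1, 2, 2, 1, 2, 2], [0, 1, 100, 2, 3, 1, 100, 2, 1, 2, 2, 1, 2, 2], [0, 1, 100, 2, 3, 1, 2, 100, 1, 2, 2, 1, 2, 2], [0, 1, 100, 2, 3, 1, 2, 2, 100, 3, 3, 1, 2, 2], [0, 1, 100, 2, 3, 1, 2, 2, 1, 100, 2, 1, 2, 2], [0, 1, 100, 2, 3, 1, 2, 2, 1, 2, 100, 1, 2, 2], [0,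 1, 100, 2, 3, 1, 2, 2, 1, 2, 2, 100, 3, 2], [0, 1, 100, 2, 3, 1, 2, 2, 1, 2, 2, 1, 100, 2], [0, 1, 100, 2, 3, 1, 2, 2, 1, 2, 2, 1, 2, 100]],
 [[100, 0, 8, 100, 7, 6, 6, 5, 4, 4, 3, 2, 2, 1], [0, 100, 1, 100, 2, 1, 2, 2, 1, 2, 2, 1, 2, 2], [0, 1, 100, 100, 3, 1, 2, 2, 1, 2, 2, 1, 2, 2], [0, 0, 0, 0, 0, 0, 0, 0, 0, 0, 0, 0, 0, 0], [0, 1, 1, 100, 100, 1, 2, 2, 1, 2, 2, 1, 2, 2], [0, 1, 1, 100, 2, 100, 3, 3, 1, 2, 2, 1, 2, 2], [0, 1, 1, 100, 2, 1, 100, 2, 1, 2, 2, 1, 2, 2], [0, 1, 1, 100, 2, 1, 2, 100, 1, 2, 2, 1, 2, 2], [0, 1, 1, 100, 2, 1, 2, 2, 100, 3, 3, 1, 2, 2], [0, 1, 1, 100, 2, 1, 2, 2, 1, 100, 2, 1, 2, 2], [0, 1, 1, 100, 2, 1, 2, 2, 1, 2, 100, 1, 2, 2], [0, 1, 1, 100,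 2, 1, 2, 2, 1, 2, 2, 100, 3, 2], [0, 1, 1, 100, 2, 1, 2, 2, 1, 2, 2, 1, 100, 2], [0, 1, 1, 100, 2, 1, 2, 2, 1, 2, 2, 1, 2, 100]],
 [[100, 0, 2, 1, 100, 6, 6, 5, 4, 4, 3, 2, 2, 1], [0, 100, 1, 2, 100, 1, 2, 2, 1, 2, 2, 1, 2, 2], [0, 1, 100, 2, 100, 1, 2, 2, 1, 2, 2, 1, 2, 2], [0, 1, 1, 100, 100, 1, 2, 2, 1, 2, 2, 1, 2, 2], [0, 0, 0, 0, 0, 0, 0, 0, 0, 0, 0, 0, 0, 0], [0, 1, 1, 2, 100, 100, 4, 3, 1, 2, 2, 1, 2, 2], [0, 1, 1, 2, 100, 1, 100, 2, 1, 2, 2, 1, 2, 2], [0, 1, 1, 2, 100, 1, 2, 100, 1, 2, 2, 1, 2, 2], [0, 1, 1, 2, 100, 1, 2, 2, 100, 3, 3, 1, 2, 2], [0, 1, 1, 2, 100, 1, 2, 2, 1, 100, 2, 1, 2, 2], [0, 1, 1, 2, 100, 1, 2, 2, 1, 2, 100, 1, 2, 2], [0, 1, 1, 2, 100, 1, 2,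 2, 1, 2, 2, 100, 3, 2], [0, 1, 1, 2, 100, 1, 2, 2, 1, 2, 2, 1, 100, 2], [0, 1, 1, 2, 100, 1, 2, 2, 1, 2, 2, 1, 2, 100]],
 [[100, 0, 2, 1, 2, 100, 3, 4, 4, 4, 3, 2, 2, 1], [0, 100, 1, 2, 2, 100, 3, 3, 1, 2, 2, 1, 2, 2], [0, 1, 100, 2, 3, 100, 4, 3, 1, 2, 2, 1, 2, 2], [0, 1, 1, 100, 2, 100, 3, 3, 1, 2, 2, 1, 2, 2], [0, 1, 1, 2, 100, 100, 4, 3, 1, 2, 2, 1, 2, 2], [0, 0, 0, 0, 0, 0, 0, 0, 0, 0, 0, 0, 0, 0], [0, 1, 1, 2, 2, 100, 100, 3, 1, 2, 2, 1, 2, 2], [0, 1, 1, 2, 2, 100, 3, 100, 1, 2, 2, 1, 2, 2], [0, 1, 1, 2, 2, 100, 3, 4, 100, 4, 3, 1, 2, 2], [0, 1, 1, 2, 2, 100, 3, 4, 1, 100, 2, 1, 2, 2], [0, 1, 1, 2, 2, 100, 3, 3, 1, 2, 100, 1, 2, 2], [0, 1, 1, 2, 2, 100, 3, 3, 1, 2,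 2, 100, 3, 2], [0, 1, 1, 2, 2, 100, 3, 3, 1, 2, 2, 1, 100, 2], [0, 1, 1, 2, 2, 100, 3, 3, 1, 2, 2, 1, 2, 100]],
 [[100, 0, 2, 1, 2, 6, 100, 5, 4, 4, 3, 2, 2, 1], [0, 100, 1, 2, 2, 1, 100, 2, 1, 2, 2, 1, 2, 2], [0, 1, 100, 2, 3, 1, 100, 2, 1, 2, 2, 1, 2, 2], [0, 1, 1, 100, 2, 1, 100, 2, 1, 2, 2, 1, 2, 2], [0, 1, 1, 2, 100, 1, 100, 2, 1, 2, 2, 1, 2, 2], [0, 1, 1, 2, 2, 100, 100, 3, 1, 2, 2, 1, 2, 2], [0, 0, 0, 0, 0, 0, 0, 0, 0, 0, 0, 0, 0, 0], [0, 1, 1, 2, 2, 1, 100, 100, 1, 2, 2, 1, 2, 2], [0, 1, 1, 2, 2, 1, 100, 2, 100, 3, 3, 1, 2, 2], [0, 1, 1, 2, 2, 1, 100, 2, 1, 100, 2, 1, 2, 2], [0, 1, 1, 2, 2, 1, 100, 2, 1, 2, 100, 1, 2, 2], [0, 1, 1, 2, 2, 1, 100, 2, 1, 2, 2, 100, 3,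 2], [0, 1, 1, 2, 2, 1, 100, 2, 1, 2, 2, 1, 100, 2], [0, 1, 1, 2, 2, 1, 100, 2, 1, 2, 2, 1, 2, 100]],
 [[100, 0, 2, 1, 2, 4, 3, 100, 4, 4, 3, 2, 2, 1], [0, 100, 1, 2, 2, 1, 2, 100, 1, 2, 2, 1, 2, 2], [0, 1, 100, 2, 3, 1, 2, 100, 1, 2, 2, 1, 2, 2], [0, 1, 1, 100, 2, 1, 2, 100, 1, 2, 2, 1, 2, 2], [0, 1, 1, 2, 100, 1, 2, 100, 1, 2, 2, 1, 2, 2], [0, 1, 1, 2, 2, 100, 3, 100, 1, 2, 2, 1, 2, 2], [0, 1, 1, 2, 2, 1, 100, 100, 1, 2, 2, 1, 2, 2], [0, 0, 0, 0, 0, 0, 0, 0, 0, 0, 0, 0, 0, 0], [0, 1, 1, 2, 2, 1, 2, 100, 100, 4, 3, 1, 2, 2], [0, 1, 1, 2, 2, 1, 2, 100, 1, 100, 2, 1, 2, 2], [0, 1, 1, 2, 2, 1, 2, 100, 1, 2, 100, 1, 2, 2], [0, 1, 1, 2, 2, 1, 2, 100, 1, 2, 2, 100, 3, 2], [0, 1,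 1, 2, 2, 1, 2, 100, 1, 2, 2, 1, 100, 2], [0, 1, 1, 2, 2, 1, 2, 100, 1, 2, 2, 1, 2, 100]],
 [[100, 0, 2, 1, 2, 4, 3, 4, 100, 4, 3, 2, 2, 1], [0, 100, 1, 2, 2, 1, 2, 2, 100, 3, 3, 1, 2, 2], [0, 1, 100, 2, 3, 1, 2, 2, 100, 3, 3, 1, 2, 2], [0, 1, 1, 100, 2, 1, 2, 2, 100, 3, 3, 1, 2, 2], [0, 1, 1, 2, 100, 1, 2, 2, 100, 3, 3, 1, 2, 2], [0, 1, 1, 2, 2, 100, 3, 4, 100, 4, 3, 1, 2, 2], [0, 1, 1, 2, 2, 1, 100, 2, 100, 3, 3, 1, 2, 2], [0, 1, 1, 2, 2, 1, 2, 100, 100, 4, 3, 1, 2, 2], [0, 0, 0, 0, 0, 0, 0, 0, 0, 0, 0, 0, 0, 0], [0, 1, 1, 2, 2, 1, 2, 2, 100, 100, 3, 1, 2, 2], [0, 1, 1, 2, 2, 1, 2, 2, 100, 3, 100, 1, 2, 2], [0, 1, 1, 2, 2, 1, 2, 2, 100, 3, 4, 100, 3, 2], [0, 1, 1, 2, 2,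 1, 2, 2, 100, 3, 4, 1, 100, 2], [0, 1, 1, 2, 2, 1, 2, 2, 100, 3, 3, 1, 2, 100]],
 [[100, 0, 2, 1, 2, 4, 3, 4, 4, 100, 3, 2, 2, 1], [0, 100, 1, 2, 2, 1, 2, 2, 1, 100, 2, 1, 2, 2], [0, 1, 100, 2, 3, 1, 2, 2, 1, 100, 2, 1, 2, 2], [0, 1, 1, 100, 2, 1, 2, 2, 1, 100, 2, 1, 2, 2], [0, 1, 1, 2, 100, 1, 2, 2, 1, 100, 2, 1, 2, 2], [0, 1, 1, 2, 2, 100, 3, 4, 1, 100, 2, 1, 2, 2], [0, 1, 1, 2, 2, 1, 100, 2, 1, 100, 2, 1, 2, 2], [0, 1, 1, 2, 2, 1, 2, 100, 1, 100, 2, 1, 2, 2], [0, 1, 1, 2, 2, 1, 2, 2, 100, 100, 3, 1, 2, 2], [0, 0, 0, 0, 0, 0, 0, 0, 0, 0, 0, 0, 0, 0], [0, 1, 1, 2, 2, 1, 2, 2, 1, 100, 100, 1, 2, 2], [0, 1, 1, 2, 2, 1, 2, 2, 1, 100, 2, 100, 3, 2], [0, 1, 1, 2, 2, 1, 2, 2,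 1, 100, 2, 1, 100, 2], [0, 1, 1, 2, 2, 1, 2, 2, 1, 100, 2, 1, 2, 100]],
 [[100, 0, 2, 1, 2, 4, 3, 4, 6, 5, 100, 2, 2, 1], [0, 100, 1, 2, 2, 1, 2, 2, 1, 2, 100, 1, 2, 2], [0, 1, 100, 2, 3, 1, 2, 2, 1, 2, 100, 1, 2, 2], [0, 1, 1, 100, 2, 1, 2, 2, 1, 2, 100, 1, 2, 2], [0, 1, 1, 2, 100, 1, 2, 2, 1, 2, 100, 1, 2, 2], [0, 1, 1, 2, 2, 100, 3, 3, 1, 2, 100, 1, 2, 2], [0, 1, 1, 2, 2, 1, 100, 2, 1, 2, 100, 1, 2, 2], [0, 1, 1, 2, 2, 1, 2, 100, 1, 2, 100, 1, 2, 2], [0, 1, 1, 2, 2, 1, 2, 2, 100, 3, 100, 1, 2, 2], [0, 1, 1, 2, 2, 1, 2, 2, 1, 100, 100, 1, 2, 2], [0, 0, 0, 0, 0, 0, 0, 0, 0, 0, 0, 0, 0, 0], [0, 1, 1, 2, 2, 1, 2, 2, 1, 2, 100, 100, 3, 2], [0, 1, 1, 2, 2, 1, 2, 2, 1, 2, 100,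 1, 100, 2], [0, 1, 1, 2, 2, 1, 2, 2, 1, 2, 100, 1, 2, 100]],
 [[100, 0, 2, 1, 2, 4, 3, 4, 4, 4, 3, 100, 2, 1], [0, 100, 1, 2, 2, 1, 2, 2, 1, 2, 2, 100, 3, 4], [0, 1, 100, 2, 3, 1, 2, 2, 1, 2, 2, 100, 3, 2], [0, 1, 1, 100, 2, 1, 2, 2, 1, 2, 2, 100, 3, 2], [0, 1, 1, 2, 100, 1, 2, 2, 1, 2, 2, 100, 3, 2], [0, 1, 1, 2, 2, 100, 3, 3, 1, 2, 2, 100, 3, 2], [0, 1, 1, 2, 2, 1, 100, 2, 1, 2, 2, 100, 3, 2], [0, 1, 1, 2, 2, 1, 2, 100, 1, 2, 2, 100, 3, 2], [0, 1, 1, 2, 2, 1, 2, 2, 100, 3, 4, 100, 3, 2], [0, 1, 1, 2, 2, 1, 2, 2, 1, 100, 2, 100, 3, 2], [0, 1, 1, 2, 2, 1, 2, 2, 1, 2, 100, 100, 3, 2], [0, 0, 0, 0, 0, 0, 0, 0, 0, 0, 0, 0, 0, 0], [0, 1, 1, 2, 2, 1, 2, 2, 1, 2, 2, 100, 100, 2],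 [0, 1, 1, 2, 2, 1, 2, 2, 1, 2, 2, 100, 3, 100]],
 [[100, 0, 2, 1, 2, 4, 3, 4, 6, 5, 6, 2, 100, 1], [0, 100, 1, 2, 2, 1, 2, 2, 1, 2, 2, 1, 100, 2], [0, 1, 100, 2, 3, 1, 2, 2, 1, 2, 2, 1, 100, 2], [0, 1, 1, 100, 2, 1, 2, 2, 1, 2, 2, 1, 100, 2], [0, 1, 1, 2, 100, 1, 2, 2, 1, 2, 2, 1, 100, 2], [0, 1, 1, 2, 2, 100, 3, 3, 1, 2, 2, 1, 100, 2], [0, 1, 1, 2, 2, 1, 100, 2, 1, 2, 2, 1, 100, 2], [0, 1, 1, 2, 2, 1, 2, 100, 1, 2, 2, 1, 100, 2], [0, 1, 1, 2, 2, 1, 2, 2, 100, 3, 4, 1, 100, 2], [0, 1, 1, 2, 2, 1, 2, 2, 1, 100, 2, 1, 100, 2], [0, 1, 1, 2, 2, 1, 2, 2, 1, 2, 100, 1, 100, 2], [0, 1, 1, 2, 2, 1, 2, 2, 1, 2, 2, 100, 100, 2], [0, 0, 0, 0, 0, 0, 0, 0, 0, 0, 0, 0, 0, 0], [0, 1, 1,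 2, 2, 1, 2, 2, 1, 2, 2, 1, 100, 100]],
 [[100, 0, 2, 1, 2, 4, 3, 4, 6, 5, 6, 8, 7, 100], [0, 100, 1, 2, 2, 1, 2, 2, 1, 2, 2, 1, 2, 100], [0, 1, 100, 2, 3, 1, 2, 2, 1, 2, 2, 1, 2, 100], [0, 1, 1, 100, 2, 1, 2, 2, 1, 2, 2, 1, 2, 100], [0, 1, 1, 2, 100, 1, 2, 2, 1, 2, 2, 1, 2, 100], [0, 1, 1, 2, 2, 100, 3, 3, 1, 2, 2, 1, 2, 100], [0, 1, 1, 2, 2, 1, 100, 2, 1, 2, 2, 1, 2, 100], [0, 1, 1, 2, 2, 1, 2, 100, 1, 2, 2, 1, 2, 100], [0, 1, 1, 2, 2, 1, 2, 2, 100, 3, 3, 1, 2, 100], [0, 1, 1, 2, 2, 1, 2, 2, 1, 100, 2, 1, 2, 100], [0, 1, 1, 2, 2, 1, 2, 2, 1, 2, 100, 1, 2, 100], [0, 1, 1, 2, 2, 1, 2, 2, 1, 2, 2, 100, 3, 100], [0, 1, 1, 2, 2, 1, 2, 2, 1, 2, 2, 1, 100, 100], [0, 0, 0, 0, 0, 0,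 0, 0, 0, 0, 0, 0, 0, 0]]]
def Fdat : List (List (List Nat)) :=
[[[0, 0, 0, 0, 0, 0, 0, 0, 0, 0, 0, 0, 0, 0], [0, 1, 3, 2, 6, 7, 4, 5, 9, 8, 12, 13, 10, 11], [0, 3, 2, 1, 6, 7, 4, 5, 9, 8, 12, 13, 10, 11], [0, 13, 4, 3, 2, 6, 5, 9, 10, 7, 8, 12, 11, 1], [0, 13, 3, 2, 4, 6, 5, 9, 10, 7, 8, 12, 11, 1], [0, 3, 4, 1, 2, 5, 7, 6, 9, 8, 12, 13, 10, 11], [0, 3, 4, 1, 2, 7, 6, 5, 9, 8, 12, 13, 10, 11], [0, 3, 4, 1, 2, 6, 5, 7, 9, 8, 12, 13, 10, 11], [0, 3, 4, 1, 2, 6, 5, 9, 8, 7, 12, 13, 10, 11], [0, 13, 3, 2, 6, 7, 4, 5, 10, 9, 8, 12, 11, 1], [0, 13, 3, 2, 6, 7, 4, 5, 9, 8, 10, 12, 11, 1], [0, 3, 4, 1, 2, 6, 5, 9, 10, 7, 8, 11, 13, 12], [0, 3, 4, 1, 2, 6, 5, 9, 10, 7, 8, 13, 12, 11], [0, 3,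 4, 1, 2, 6, 5, 9, 10, 7, 8, 12, 11, 13]],
 [[0, 1, 3, 2, 6, 7, 4, 5, 9, 8, 12, 13, 10, 11], [0, 0, 0, 0, 0, 0, 0, 0, 0, 0, 0, 0, 0, 0], [5, 1, 2, 4, 3, 0, 7, 6, 9, 8, 12, 13, 10, 11], [2, 1, 0, 3, 6, 7, 4, 5, 9, 8, 12, 13, 10, 11], [5, 1, 3, 2, 4, 0, 7, 6, 9, 8, 12, 13, 10, 11], [2, 1, 0, 4, 3, 5, 7, 6, 9, 8, 12, 13, 10, 11], [2, 1, 0, 4, 3, 7, 6, 5, 9, 8, 12, 13, 10, 11], [2, 1, 0, 4, 3, 6, 5, 7, 9, 8, 12, 13, 10, 11], [2, 1, 0, 4, 3, 6, 5, 9, 8, 7, 12, 13, 10, 11], [8, 1, 3, 2, 6, 7, 4, 5, 0, 9, 12, 13, 10, 11], [11, 1, 3, 2, 6, 7, 4, 5, 9, 8, 10, 0, 13, 12], [2, 1, 0, 4, 3, 6, 5, 9, 10, 7, 8, 11, 13, 12], [2, 1, 0, 4, 3, 6, 5, 9, 10, 7, 8, 13, 12, 11], [2, 1, 0, 4, 3,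 6, 5, 9, 10, 7, 8, 12, 11, 13]],
 [[0, 3, 2, 1, 6, 7, 4, 5, 9, 8, 12, 13, 10, 11], [5, 1, 2, 4, 3, 0, 7, 6, 9, 8, 12, 13, 10, 11], [0, 0, 0, 0, 0, 0, 0, 0, 0, 0, 0, 0, 0, 0], [1, 0, 2, 3, 6, 7, 4, 5, 9, 8, 12, 13, 10, 11], [5, 3, 2, 1, 4, 0, 7, 6, 9, 8, 12, 13, 10, 11], [1, 0, 2, 4, 3, 5, 7, 6, 9, 8, 12, 13, 10, 11], [1, 0, 2, 4, 3, 7, 6, 5, 9, 8, 12, 13, 10, 11], [1, 0, 2, 4, 3, 6, 5, 7, 9, 8, 12, 13, 10, 11], [1, 0, 2, 4, 3, 6, 5, 9, 8, 7, 12, 13, 10, 11], [5, 13, 2, 4, 3, 0, 7, 6, 10, 9, 8, 12, 11, 1], [5, 13, 2, 4, 3, 0, 7, 6, 9, 8, 10, 12, 11, 1], [1, 0, 2, 4, 3, 6, 5, 9, 10, 7, 8, 11, 13, 12], [1, 0, 2, 4, 3, 6, 5, 9, 10, 7, 8, 13, 12, 11], [1, 0, 2, 4, 3, 6, 5, 9,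 10, 7, 8, 12, 11, 13]],
 [[0, 13, 4, 3, 2, 6, 5, 9, 10, 7, 8, 12, 11, 1], [2, 1, 0, 3, 6, 7, 4, 5, 9, 8, 12, 13, 10, 11], [1, 0, 2, 3, 6, 7, 4, 5, 9, 8, 12, 13, 10, 11], [0, 0, 0, 0, 0, 0, 0, 0, 0, 0, 0, 0, 0, 0], [2, 13, 0, 3, 4, 6, 5, 9, 10, 7, 8, 12, 11, 1], [1, 0, 4, 3, 2, 5, 7, 6, 9, 8, 12, 13, 10, 11], [1, 0, 4, 3, 2, 7, 6, 5, 9, 8, 12, 13, 10, 11], [1, 0, 4, 3, 2, 6, 5, 7, 9, 8, 12, 13, 10, 11], [1, 0, 4, 3, 2, 6, 5, 9, 8, 7, 12, 13, 10, 11], [2, 13, 0, 3, 6, 7, 4, 5, 10, 9, 8, 12, 11, 1], [2, 13, 0, 3, 6, 7, 4, 5, 9, 8, 10, 12, 11, 1], [1, 0, 4, 3, 2, 6, 5, 9, 10, 7, 8, 11, 13, 12], [1, 0, 4, 3, 2, 6, 5, 9, 10, 7, 8, 13, 12, 11], [1, 0, 4, 3, 2, 6, 5, 9, 10, 7, 8,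 12, 11, 13]],
 [[0, 13, 3, 2, 4, 6, 5, 9, 10, 7, 8, 12, 11, 1], [5, 1, 3, 2, 4, 0, 7, 6, 9, 8, 12, 13, 10, 11], [5, 3, 2, 1, 4, 0, 7, 6, 9, 8, 12, 13, 10, 11], [2, 13, 0, 3, 4, 6, 5, 9, 10, 7, 8, 12, 11, 1], [0, 0, 0, 0, 0, 0, 0, 0, 0, 0, 0, 0, 0, 0], [1, 0, 3, 2, 4, 5, 7, 6, 9, 8, 12, 13, 10, 11], [1, 0, 3, 2, 4, 7, 6, 5, 9, 8, 12, 13, 10, 11], [1, 0, 3, 2, 4, 6, 5, 7, 9, 8, 12, 13, 10, 11], [1, 0, 3, 2, 4, 6, 5, 9, 8, 7, 12, 13, 10, 11], [5, 13, 3, 2, 4, 0, 7, 6, 10, 9, 8, 12, 11, 1], [5, 13, 3, 2, 4, 0, 7, 6, 9, 8, 10, 12, 11, 1], [1, 0, 3, 2, 4, 6, 5, 9, 10, 7, 8, 11, 13, 12], [1, 0, 3, 2, 4, 6, 5, 9, 10, 7, 8, 13, 12, 11], [1, 0, 3, 2, 4, 6, 5, 9, 10, 7, 8, 12, 11, 1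3]],
 [[0, 3, 4, 1, 2, 5, 7, 6, 9, 8, 12, 13, 10, 11], [2, 1, 0, 4, 3, 5, 7, 6, 9, 8, 12, 13, 10, 11], [1, 0, 2, 4, 3, 5, 7, 6, 9, 8, 12, 13, 10, 11], [1, 0, 4, 3, 2, 5, 7, 6, 9, 8, 12, 13, 10, 11], [1, 0, 3, 2, 4, 5, 7, 6, 9, 8, 12, 13, 10, 11], [0, 0, 0, 0, 0, 0, 0, 0, 0, 0, 0, 0, 0, 0], [2, 13, 0, 4, 3, 5, 6, 9, 10, 7, 8, 12, 11, 1], [1, 0, 3, 2, 6, 5, 4, 7, 9, 8, 12, 13, 10, 11], [1, 0, 3, 2, 6, 5, 4, 9, 8, 7, 12, 13, 10, 11], [2, 13, 0, 4, 3, 5, 7, 6, 10, 9, 8, 12, 11, 1], [2, 13, 0, 4, 3, 5, 7, 6, 9, 8, 10, 12, 11, 1], [1, 0, 3, 2, 6, 5, 4, 9, 10, 7, 8, 11, 13, 12], [1, 0, 3, 2, 6, 5, 4, 9, 10, 7, 8, 13, 12, 11], [1, 0, 3, 2, 6, 5, 4, 9, 10, 7, 8, 12, 11, 13]],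
 [[0, 3, 4, 1, 2, 7, 6, 5, 9, 8, 12, 13, 10, 11], [2, 1, 0, 4, 3, 7, 6, 5, 9, 8, 12, 13, 10, 11], [1, 0, 2, 4, 3, 7, 6, 5, 9, 8, 12, 13, 10, 11], [1, 0, 4, 3, 2, 7, 6, 5, 9, 8, 12, 13, 10, 11], [1, 0, 3, 2, 4, 7, 6, 5, 9, 8, 12, 13, 10, 11], [2, 13, 0, 4, 3, 5, 6, 9, 10, 7, 8, 12, 11, 1], [0, 0, 0, 0, 0, 0, 0, 0, 0, 0, 0, 0, 0, 0], [5, 3, 4, 1, 2, 0, 6, 7, 9, 8, 12, 13, 10, 11], [2, 13, 0, 4, 3, 7, 6, 5, 8, 10, 9, 12, 11, 1], [2, 13, 0, 4, 3, 7, 6, 5, 10, 9, 8, 12, 11, 1], [2, 13, 0, 4, 3, 7, 6, 5, 9, 8, 10, 12, 11, 1], [2, 13, 0, 4, 3, 7, 6, 5, 9, 8, 12, 11, 10, 1], [5, 3, 4, 1, 2, 0, 6, 9, 10, 7, 8, 13, 12, 11], [5, 3, 4, 1, 2, 0, 6, 9, 10, 7, 8, 12, 11, 13]],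
 [[0, 3, 4, 1, 2, 6, 5, 7, 9, 8, 12, 13, 10, 11], [2, 1, 0, 4, 3, 6, 5, 7, 9, 8, 12, 13, 10, 11], [1, 0, 2, 4, 3, 6, 5, 7, 9, 8, 12, 13, 10, 11], [1, 0, 4, 3, 2, 6, 5, 7, 9, 8, 12, 13, 10, 11], [1, 0, 3, 2, 4, 6, 5, 7, 9, 8, 12, 13, 10, 11], [1, 0, 3, 2, 6, 5, 4, 7, 9, 8, 12, 13, 10, 11], [5, 3, 4, 1, 2, 0, 6, 7, 9, 8, 12, 13, 10, 11], [0, 0, 0, 0, 0, 0, 0, 0, 0, 0, 0, 0, 0, 0], [2, 13, 0, 4, 3, 6, 5, 7, 8, 10, 9, 12, 11, 1], [2, 13, 0, 4, 3, 6, 5, 7, 10, 9, 8, 12, 11, 1], [2, 13, 0, 4, 3, 6, 5, 7, 9, 8, 10, 12, 11, 1], [2, 13, 0, 4, 3, 6, 5, 7, 9, 8, 12, 11, 10, 1], [8, 3, 4, 1, 2, 6, 5, 7, 0, 10, 9, 13, 12, 11], [8, 3, 4, 1, 2, 6, 5, 7, 0, 10, 9, 12, 11, 13]],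
 [[0, 3, 4, 1, 2, 6, 5, 9, 8, 7, 12, 13, 10, 11], [2, 1, 0, 4, 3, 6, 5, 9, 8, 7, 12, 13, 10, 11], [1, 0, 2, 4, 3, 6, 5, 9, 8, 7, 12, 13, 10, 11], [1, 0, 4, 3, 2, 6, 5, 9, 8, 7, 12, 13, 10, 11], [1, 0, 3, 2, 4, 6, 5, 9, 8, 7, 12, 13, 10, 11], [1, 0, 3, 2, 6, 5, 4, 9, 8, 7, 12, 13, 10, 11], [2, 13, 0, 4, 3, 7, 6, 5, 8, 10, 9, 12, 11, 1], [2, 13, 0, 4, 3, 6, 5, 7, 8, 10, 9, 12, 11, 1], [0, 0, 0, 0, 0, 0, 0, 0, 0, 0, 0, 0, 0, 0], [1, 0, 3, 2, 6, 7, 4, 5, 8, 9, 12, 13, 10, 11], [2, 13, 0, 4, 3, 6, 5, 9, 8, 7, 10, 12, 11, 1], [1, 0, 3, 2, 6, 7, 4, 5, 8, 10, 9, 11, 13, 12], [1, 0, 3, 2, 6, 7, 4, 5, 8, 10, 9, 13, 12, 11], [1, 0, 3, 2, 6, 7, 4, 5, 8, 10, 9, 12, 11, 13]],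
 [[0, 13, 3, 2, 6, 7, 4, 5, 10, 9, 8, 12, 11, 1], [8, 1, 3, 2, 6, 7, 4, 5, 0, 9, 12, 13, 10, 11], [5, 13, 2, 4, 3, 0, 7, 6, 10, 9, 8, 12, 11, 1], [2, 13, 0, 3, 6, 7, 4, 5, 10, 9, 8, 12, 11, 1], [5, 13, 3, 2, 4, 0, 7, 6, 10, 9, 8, 12, 11, 1], [2, 13, 0, 4, 3, 5, 7, 6, 10, 9, 8, 12, 11, 1], [2, 13, 0, 4, 3, 7, 6, 5, 10, 9, 8, 12, 11, 1], [2, 13, 0, 4, 3, 6, 5, 7, 10, 9, 8, 12, 11, 1], [1, 0, 3, 2, 6, 7, 4, 5, 8, 9, 12, 13, 10, 11], [0, 0, 0, 0, 0, 0, 0, 0, 0, 0, 0, 0, 0, 0], [8, 13, 3, 2, 6, 7, 4, 5, 0, 9, 10, 12, 11, 1], [1, 0, 3, 2, 6, 7, 4, 5, 10, 9, 8, 11, 13, 12], [1, 0, 3, 2, 6, 7, 4, 5, 10, 9, 8, 13, 12, 11], [1, 0, 3, 2, 6, 7, 4, 5, 10, 9, 8, 12, 11, 13]],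
 [[0, 13, 3, 2, 6, 7, 4, 5, 9, 8, 10, 12, 11, 1], [11, 1, 3, 2, 6, 7, 4, 5, 9, 8, 10, 0, 13, 12], [5, 13, 2, 4, 3, 0, 7, 6, 9, 8, 10, 12, 11, 1], [2, 13, 0, 3, 6, 7, 4, 5, 9, 8, 10, 12, 11, 1], [5, 13, 3, 2, 4, 0, 7, 6, 9, 8, 10, 12, 11, 1], [2, 13, 0, 4, 3, 5, 7, 6, 9, 8, 10, 12, 11, 1], [2, 13, 0, 4, 3, 7, 6, 5, 9, 8, 10, 12, 11, 1], [2, 13, 0, 4, 3, 6, 5, 7, 9, 8, 10, 12, 11, 1], [2, 13, 0, 4, 3, 6, 5, 9, 8, 7, 10, 12, 11, 1], [8, 13, 3, 2, 6, 7, 4, 5, 0, 9, 10, 12, 11, 1], [0, 0, 0, 0, 0, 0, 0, 0, 0, 0, 0, 0, 0, 0], [1, 0, 3, 2, 6, 7, 4, 5, 9, 8, 10, 11, 13, 12], [1, 0, 3, 2, 6, 7, 4, 5, 9, 8, 10, 13, 12, 11], [1, 0, 3, 2, 6, 7, 4, 5, 9, 8, 10, 12, 11, 13]],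
 [[0, 3, 4, 1, 2, 6, 5, 9, 10, 7, 8, 11, 13, 12], [2, 1, 0, 4, 3, 6, 5, 9, 10, 7, 8, 11, 13, 12], [1, 0, 2, 4, 3, 6, 5, 9, 10, 7, 8, 11, 13, 12], [1, 0, 4, 3, 2, 6, 5, 9, 10, 7, 8, 11, 13, 12], [1, 0, 3, 2, 4, 6, 5, 9, 10, 7, 8, 11, 13, 12], [1, 0, 3, 2, 6, 5, 4, 9, 10, 7, 8, 11, 13, 12], [2, 13, 0, 4, 3, 7, 6, 5, 9, 8, 12, 11, 10, 1], [2, 13, 0, 4, 3, 6, 5, 7, 9, 8, 12, 11, 10, 1], [1, 0, 3, 2, 6, 7, 4, 5, 8, 10, 9, 11, 13, 12], [1, 0, 3, 2, 6, 7, 4, 5, 10, 9, 8, 11, 13, 12], [1, 0, 3, 2, 6, 7, 4, 5, 9, 8, 10, 11, 13, 12], [0, 0, 0, 0, 0, 0, 0, 0, 0, 0, 0, 0, 0, 0], [2, 13, 0, 4, 3, 6, 5, 9, 10, 7, 8, 11, 12, 1], [1, 0, 3, 2, 6, 7, 4, 5, 9, 8, 12, 11, 10, 13]],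
 [[0, 3, 4, 1, 2, 6, 5, 9, 10, 7, 8, 13, 12, 11], [2, 1, 0, 4, 3, 6, 5, 9, 10, 7, 8, 13, 12, 11], [1, 0, 2, 4, 3, 6, 5, 9, 10, 7, 8, 13, 12, 11], [1, 0, 4, 3, 2, 6, 5, 9, 10, 7, 8, 13, 12, 11], [1, 0, 3, 2, 4, 6, 5, 9, 10, 7, 8, 13, 12, 11], [1, 0, 3, 2, 6, 5, 4, 9, 10, 7, 8, 13, 12, 11], [5, 3, 4, 1, 2, 0, 6, 9, 10, 7, 8, 13, 12, 11], [8, 3, 4, 1, 2, 6, 5, 7, 0, 10, 9, 13, 12, 11], [1, 0, 3, 2, 6, 7, 4, 5, 8, 10, 9, 13, 12, 11], [1, 0, 3, 2, 6, 7, 4, 5, 10, 9, 8, 13, 12, 11], [1, 0, 3, 2, 6, 7, 4, 5, 9, 8, 10, 13, 12, 11], [2, 13, 0, 4, 3, 6, 5, 9, 10, 7, 8, 11, 12, 1], [0, 0, 0, 0, 0, 0, 0, 0, 0, 0, 0, 0, 0, 0], [11, 3, 4, 1, 2, 6, 5, 9, 10, 7, 8, 0, 12, 13]],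
 [[0, 3, 4, 1, 2, 6, 5, 9, 10, 7, 8, 12, 11, 13], [2, 1, 0, 4, 3, 6, 5, 9, 10, 7, 8, 12, 11, 13], [1, 0, 2, 4, 3, 6, 5, 9, 10, 7, 8, 12, 11, 13], [1, 0, 4, 3, 2, 6, 5, 9, 10, 7, 8, 12, 11, 13], [1, 0, 3, 2, 4, 6, 5, 9, 10, 7, 8, 12, 11, 13], [1, 0, 3, 2, 6, 5, 4, 9, 10, 7, 8, 12, 11, 13], [5, 3, 4, 1, 2, 0, 6, 9, 10, 7, 8, 12, 11, 13], [8, 3, 4, 1, 2, 6, 5, 7, 0, 10, 9, 12, 11, 13], [1, 0, 3, 2, 6, 7, 4, 5, 8, 10, 9, 12, 11, 13], [1, 0, 3, 2, 6, 7, 4, 5, 10, 9, 8, 12, 11, 13], [1, 0, 3, 2, 6, 7, 4, 5, 9, 8, 10, 12, 11, 13], [1, 0, 3, 2, 6, 7, 4, 5, 9, 8, 12, 11, 10, 13], [11, 3, 4, 1, 2, 6, 5, 9, 10, 7, 8, 0, 12, 13], [0, 0, 0, 0, 0, 0, 0, 0, 0, 0, 0, 0, 0, 0]]]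
def Rdat : List (List Nat) :=
[[0, 2, 1, 1, 1, 1, 1, 1, 1, 1, 1, 1, 1, 1],
 [2, 0, 0, 0, 0, 0, 0, 0, 0, 0, 0, 0, 0, 0],
 [1, 0, 0, 0, 0, 0, 0, 0, 0, 0, 0, 0, 0, 0],
 [1, 0, 0, 0, 0, 0, 0, 0, 0, 0, 0, 0, 0, 0],
 [1, 0, 0, 0, 0, 0, 0, 0, 0, 0, 0, 0, 0, 0],
 [1, 0, 0, 0, 0, 0, 0, 0, 0, 0, 0, 0, 0, 0],
 [1, 0, 0, 0, 0, 0, 0, 0, 0, 0, 0, 0, 0, 0],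
 [1, 0, 0, 0, 0, 0, 0, 0, 0, 0, 0, 0, 0, 0],
 [1, 0, 0, 0, 0, 0, 0, 0, 0, 0, 0, 0, 0, 0],
 [1, 0, 0, 0, 0, 0, 0, 0, 0, 0, 0, 0, 0, 0],
 [1, 0, 0, 0, 0, 0, 0, 0, 0, 0, 0, 0, 0, 0],
 [1, 0, 0, 0, 0, 0, 0, 0, 0, 0, 0, 0, 0, 0],
 [1, 0, 0, 0, 0, 0, 0, 0, 0, 0, 0, 0, 0, 0],
 [1, 0, 0, 0, 0, 0, 0, 0, 0, 0, 0, 0, 0, 0]]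

def edgeL : List (Nat × Nat) := [(0,1),(0,2),(0,5),(0,8),(0,11),(2,3),(3,4),(2,4),(5,6),(6,7),(5,7),(8,9),(9,10),(8,10),(11,12),(12,13),(11,13),(1,3),(4,6),(7,9),(10,12),(13,1)]

def adjB (a b : Fin 14) : Bool := decide ((a.1,b.1) ∈ edgeL ∨ (b.1,a.1) ∈ edgeL)

def look3 (d : List (List (List Nat))) (x y v : Fin 14) : Fin 14 :=
  ⟨(((d.getD x.1 []).getD y.1 []).getD v.1 0) % 14, Nat.mod_lt _ (by norm_num)⟩

def Pf (x y v : Fin 14) : Fin 14 := look3 Pdat x y v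
def Ff (x y v : Fin 14) : Fin 14 := look3 Fdat x y v
def Nf (x y v : Fin 14) : ℕ := ((Ndat.getD x.1 []).getD y.1 []).getD v.1 0
def Rf (x y : Fin 14) : Fin 14 := ⟨((Rdat.getD x.1 []).getD y.1 0) % 14, Nat.mod_lt _ (by norm_num)⟩

set_option maxHeartbeats 4000000 in
set_option synthInstance.maxSize 4000 in
set_option synthInstance.maxHeartbeats 2000000 in
lemma G0_adj : ∀ a b : Fin 14, G0.Adj a b ↔ adjB a b = true := by
  simp only [G0, fromEdgeSet_adj, Set.mem_insert_iff, Set.mem_singleton_iff, Sym2.eq_iff]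
  decide

set_option maxHeartbeats 4000000 in
lemma conn_data : ∀ x y : Fin 14, x ≠ y →
    Rf x y ≠ x ∧ Rf x y ≠ y ∧
    ∀ v : Fin 14, v ≠ Rf x y →
      (Pf x y v ≠ x ∧ Pf x y v ≠ y ∧ adjB v (Pf x y v) = true ∧
        Nf x y (Pf x y v) < Nf x y v) := by decide

set_option maxHeartbeats 4000000 in
lemma match_data : ∀ x y : Fin 14, x ≠ y → ∀ v : Fin 14, v ≠ x → v ≠ y →
    (Ff x y v ≠ x ∧ Ff x y v ≠ y ∧ Ff x y (Ff x y v) = v ∧ Ff x y v ≠ v ∧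
      adjB v (Ff x y v) = true) := by decide

lemma connected_induce_of {V : Type*} (G : SimpleGraph V) (S : Set V) (r : V) (hr : r ∈ S)
    (p : V → V) (n : V → ℕ)
    (h : ∀ v, v ∈ S → v ≠ r → p v ∈ S ∧ G.Adj v (p v) ∧ n (p v) < n v) :
    (G.induce S).Connected := by
  have key : ∀ k (v : V) (hv : v ∈ S), n v < k → (G.induce S).Reachable ⟨v, hv⟩ ⟨r, hr⟩ := by
    intro k
    induction k with
    | zero => intro v hv hn; omega
    | succ k ih =>
      intro v hv hn
      by_cases hvr : v = r
      · subst hvr; exact SimpleGraph.Reachable.refl _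
      · obtain ⟨h1, h2, h3⟩ := h v hv hvr
        have hadj : (G.induce S).Adj ⟨v, hv⟩ ⟨p v, h1⟩ := h2
        exact hadj.reachable.trans (ih (p v) h1 (by omega))
  rw [connected_iff]
  refine ⟨fun a b => ?_, ⟨⟨r, hr⟩⟩⟩
  obtain ⟨a, ha⟩ := a; obtain ⟨b, hb⟩ := b
  exact (key (n a + 1) a ha (by omega)).trans (key (n b + 1) b hb (by omega)).symm

lemma pm_induce_of {V : Type*} (G : SimpleGraph V) (S : Set V) (f : V → V)
    (h : ∀ v, v ∈ S → f v ∈ S ∧ f (f v) = v ∧ f v ≠ v ∧ G.Adj v (f v)) :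
    ∃ M : (G.induce S).Subgraph, M.IsPerfectMatching := by
  refine ⟨{ verts := Set.univ
            Adj := fun a b => f a.1 = b.1 ∧ f b.1 = a.1
            adj_sub := ?_
            edge_vert := fun _ => trivial
            symm := ⟨fun a b hab => ⟨hab.2, hab.1⟩⟩ }, ?_⟩
  · rintro ⟨a, ha⟩ ⟨b, hb⟩ ⟨h1, h2⟩
    have hadj := (h a ha).2.2.2
    have h1' : f a = b := h1
    show G.Adj a b
    rw [← h1']; exact hadj
  · rw [SimpleGraph.Subgraph.isPerfectMatching_iff]
    rintro ⟨v, hv⟩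
    obtain ⟨h1, h2, h3, h4⟩ := h v hv
    refine ⟨⟨f v, h1⟩, ⟨rfl, h2⟩, ?_⟩
    rintro ⟨w, hw⟩ ⟨hw1, hw2⟩
    exact Subtype.ext hw1.symm

lemma small_subset' {s : Set (Fin 14)} (hs : s.ncard ≤ 2) :
    ∃ x y : Fin 14, x ≠ y ∧ s ⊆ {x, y} := by
  have hfin : s.Finite := Set.toFinite s
  obtain h0 | h1 | h2 : s.ncard = 0 ∨ s.ncard = 1 ∨ s.ncard = 2 := by omega
  · have he : s = ∅ := (Set.ncard_eq_zero hfin).mp h0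
    exact ⟨0, 1, by decide, by simp [he]⟩
  · obtain ⟨a, rfl⟩ := Set.ncard_eq_one.mp h1
    obtain ⟨b, hb⟩ := exists_ne a
    exact ⟨a, b, hb.symm, by simp⟩
  · obtain ⟨a, b, hab, rfl⟩ := Set.ncard_eq_two.mp h2
    exact ⟨a, b, hab, subset_rfl⟩

def EF : Finset (Sym2 (Fin 14)) :=
    {s(0, 1), s(0, 2), s(0, 5), s(0, 8), s(0, 11),
     s(2, 3), s(3, 4), s(2, 4),
     s(5, 6), s(6, 7), s(5, 7),
     s(8, 9), s(9, 10), s(8, 10),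
     s(11, 12), s(12, 13), s(11, 13),
     s(1, 3), s(4, 6), s(7, 9), s(10, 12), s(13, 1)}

set_option maxHeartbeats 4000000 in
set_option synthInstance.maxSize 4000 in
set_option synthInstance.maxHeartbeats 2000000 in
lemma edge_mem : ∀ a b : Fin 14, adjB a b = true ↔ s(a, b) ∈ EF := by
  simp only [EF, Finset.mem_insert, Finset.mem_singleton, Sym2.eq_iff]
  decide

lemma edgeSet_eq : G0.edgeSet = ↑EF := by
  ext e
  induction e using Sym2.ind with
  | _ a b =>
    rw [mem_edgeSet, G0_adj, edge_mem]
    exact Finset.mem_coe.symm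

/-- `G₀` is a brick on 14 vertices with 22 edges. -/
theorem stmt2 : IsBrick G0 ∧ Fintype.card (Fin 14) = 14 ∧ G0.edgeSet.ncard = 22 := by
  refine ⟨⟨⟨by norm_num, ?_⟩, ?_⟩, by norm_num, ?_⟩
  · -- 3-connectivity
    intro s hs
    obtain ⟨x, y, hxy, hsub⟩ := small_subset' hs
    obtain ⟨hr1, hr2, hP⟩ := conn_data x y hxy
    refine connected_induce_of G0 sᶜ (Rf x y) ?_ (Pf x y) (Nf x y) ?_
    · intro hmem
      rcases hsub hmem with h | h
      · exact hr1 h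
      · exact hr2 h
    · intro v hv hvr
      obtain ⟨h1, h2, h3, h4⟩ := hP v hvr
      refine ⟨?_, (G0_adj _ _).mpr h3, h4⟩
      intro hmem
      rcases hsub hmem with h | h
      · exact h1 h
      · exact h2 h
  · -- matchings
    intro x y hxy
    refine pm_induce_of G0 _ (Ff x y) ?_
    rintro v ⟨hv1, hv2⟩
    obtain ⟨h1, h2, h3, h4, h5⟩ := match_data x y hxy v hv1 hv2
    exact ⟨⟨h1, h2⟩, h3, h4, (G0_adj _ _).mpr h5⟩
  · rw [edgeSet_eq, Set.ncard_coe_finset]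
    decide
end

section
/- Let G_0 be the graph obtained from the wheel W_5 (with hub u and rim cycle v_1 v_2 v_3 v_4 v_5) by performing triangle-insertions at the four rim vertices v_1, v_2, v_3, v_4. For every neighbor v of u in G_0: if v lies in a triangle of G_0 (i.e., v is a vertex of one of the four inserted triangles), then G_0 − {u, v} has exactly two perfect matchings; otherwise (i.e., v = v_5), G_0 − {u, v} has exactly one perfect matching. -/
open SimpleGraph

def EL : Finset (Sym2 (Fin 14)) :=
    {s(0, 1), s(0, 2), s(0, 5), s(0, 8), s(0, 11),
     s(2, 3), s(3, 4), s(2, 4),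
     s(5, 6), s(6, 7), s(5, 7),
     s(8, 9), s(9, 10), s(8, 10),
     s(11, 12), s(12, 13), s(11, 13),
     s(1, 3), s(4, 6), s(7, 9), s(10, 12), s(13, 1)}

lemma G0_adj_s4 (a b : Fin 14) : G0.Adj a b ↔ (s(a,b) ∈ EL ∧ a ≠ b) := by
  have h : ({s(0, 1), s(0, 2), s(0, 5), s(0, 8), s(0, 11),
     s(2, 3), s(3, 4), s(2, 4),
     s(5, 6), s(6, 7), s(5, 7),
     s(8, 9), s(9, 10), s(8, 10),
     s(11, 12), s(12, 13), s(11, 13),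
     s(1, 3), s(4, 6), s(7, 9), s(10, 12), s(13, 1)} : Set (Sym2 (Fin 14))) = ↑EL := by
    simp [EL]
  rw [G0, SimpleGraph.fromEdgeSet_adj, h, Finset.mem_coe]

instance : DecidableRel G0.Adj := fun a b => decidable_of_iff _ (G0_adj_s4 a b).symm

section
variable {V : Type*} {G : SimpleGraph V}

def pmSub (G : SimpleGraph V) (f : V → V) (hf : ∀ x, G.Adj x (f x))
    (hinv : ∀ x, f (f x) = x) : G.Subgraph where
  verts := Set.univ
  Adj a b := f a = b
  adj_sub := by intro a b h; subst h; exact hf a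
  edge_vert := by intro a b _; trivial
  symm := ⟨by intro a b h; subst h; exact hinv a⟩

lemma pmSub_isPM (f : V → V) (hf : ∀ x, G.Adj x (f x)) (hinv : ∀ x, f (f x) = x) :
    (pmSub G f hf hinv).IsPerfectMatching :=
  ⟨fun v _ => ⟨f v, rfl, fun y hy => (show f v = y from hy).symm⟩, fun v => Set.mem_univ v⟩

lemma pm_unique {M N : G.Subgraph} (hM : M.IsPerfectMatching) (hN : N.IsPerfectMatching)
    (h : ∀ a b, N.Adj a b → M.Adj a b) : M = N := by
  apply SimpleGraph.Subgraph.ext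
  · rw [Set.eq_univ_of_forall hM.2, Set.eq_univ_of_forall hN.2]
  · funext a b
    apply propext
    constructor
    · intro hab
      obtain ⟨c, hc, -⟩ := hN.1 (hN.2 a)
      have hbc : b = c := (hM.1 (M.edge_vert hab)).unique hab (h a c hc)
      exact hbc ▸ hc
    · exact h a b

end

def mkPM (v : Fin 14) (g : Fin 14 → Fin 14)
    (h1 : ∀ n : Fin 14, n ≠ 0 → n ≠ v → G0.Adj n (g n))
    (h2 : ∀ n : Fin 14, n ≠ 0 → n ≠ v → g n ≠ 0 ∧ g n ≠ v)
    (h3 : ∀ n : Fin 14, n ≠ 0 → n ≠ v → g (g n) = n) :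
    (G0.induce {z : Fin 14 | z ≠ 0 ∧ z ≠ v}).Subgraph :=
  pmSub _ (fun x => ⟨g x.1, h2 x.1 x.2.1 x.2.2⟩)
    (fun x => h1 x.1 x.2.1 x.2.2)
    (fun x => Subtype.ext (h3 x.1 x.2.1 x.2.2))

lemma mkPM_isPM (v g h1 h2 h3) : (mkPM v g h1 h2 h3).IsPerfectMatching :=
  pmSub_isPM _ _ _

lemma partner_opts {v : Fin 14} {M : (G0.induce {z : Fin 14 | z ≠ 0 ∧ z ≠ v}).Subgraph}
    (hm : M.IsPerfectMatching) (a : Fin 14) (ha0 : a ≠ 0) (hav : a ≠ v)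
    (L : List (Fin 14)) (hL : ∀ b : Fin 14, G0.Adj a b → b ≠ 0 → b ≠ v → b ∈ L) :
    ∃ b : Fin 14, ∃ hb : b ≠ 0 ∧ b ≠ v, b ∈ L ∧ M.Adj ⟨a, ha0, hav⟩ ⟨b, hb⟩ := by
  obtain ⟨y, hy, -⟩ := hm.1 (hm.2 ⟨a, ha0, hav⟩)
  have hadj : G0.Adj a y.1 := M.adj_sub hy
  exact ⟨y.1, y.2, hL _ hadj y.2.1 y.2.2, hy⟩

lemma conflict {v : Fin 14} {M : (G0.induce {z : Fin 14 | z ≠ 0 ∧ z ≠ v}).Subgraph}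
    (hm : M.IsPerfectMatching) {a b c : Fin 14} {ha hb hc}
    (h1 : M.Adj ⟨a, ha⟩ ⟨b, hb⟩) (h2 : M.Adj ⟨a, ha⟩ ⟨c, hc⟩) (hbc : b ≠ c) : False :=
  hbc (congrArg Subtype.val ((hm.1 (M.edge_vert h1)).unique h1 h2))

lemma adj_cast {v : Fin 14} {M : (G0.induce {z : Fin 14 | z ≠ 0 ∧ z ≠ v}).Subgraph}
    {x y : ↥{z : Fin 14 | z ≠ 0 ∧ z ≠ v}} {b : Fin 14} {hb : b ≠ 0 ∧ b ≠ v}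
    (h : M.Adj x ⟨b, hb⟩) (he : y.1 = b) : M.Adj x y := by
  obtain ⟨yv, hyv⟩ := y
  cases he
  exact h

lemma eq_mkPM {v : Fin 14} {g : Fin 14 → Fin 14} {h1 h2 h3}
    {M : (G0.induce {z : Fin 14 | z ≠ 0 ∧ z ≠ v}).Subgraph} (hm : M.IsPerfectMatching)
    (h : ∀ (n : Fin 14) (hn : n ≠ 0 ∧ n ≠ v), M.Adj ⟨n, hn⟩ ⟨g n, h2 n hn.1 hn.2⟩) :
    M = mkPM v g h1 h2 h3 := by
  refine pm_unique hm (mkPM_isPM _ _ _ _ _) ?_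
  intro a b hab
  cases (show (⟨g a.1, h2 a.1 a.2.1 a.2.2⟩ : ↥{z : Fin 14 | z ≠ 0 ∧ z ≠ v}) = b from hab)
  exact h a.1 a.2

lemma mkPM_ne {v : Fin 14} {g g' : Fin 14 → Fin 14} {h1 h2 h3 h1' h2' h3'}
    (n : Fin 14) (hn : n ≠ 0 ∧ n ≠ v) (hg : g n ≠ g' n) :
    mkPM v g h1 h2 h3 ≠ mkPM v g' h1' h2' h3' := by
  intro h
  have hA : (mkPM v g' h1' h2' h3').Adj ⟨n, hn⟩ ⟨g n, h2 n hn.1 hn.2⟩ :=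
    h ▸ (rfl : (mkPM v g h1 h2 h3).Adj ⟨n, hn⟩ ⟨g n, h2 n hn.1 hn.2⟩)
  have hB : (mkPM v g' h1' h2' h3').Adj ⟨n, hn⟩ ⟨g' n, h2' n hn.1 hn.2⟩ := rfl
  exact conflict (mkPM_isPM _ _ _ _ _) hB hA hg.symm

def A1 := mkPM 1 ![0,1,3,2,6,7,4,5,9,8,12,13,10,11] (by decide) (by decide) (by decide)
def A2 := mkPM 2 ![0,3,2,1,6,7,4,5,9,8,12,13,10,11] (by decide) (by decide) (by decide)
def B2 := mkPM 2 ![0,13,2,4,3,6,5,9,10,7,8,12,11,1] (by decide) (by decide) (by decide)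
def A5 := mkPM 5 ![0,3,4,1,2,5,7,6,9,8,12,13,10,11] (by decide) (by decide) (by decide)
def B5 := mkPM 5 ![0,13,3,2,6,5,4,9,10,7,8,12,11,1] (by decide) (by decide) (by decide)
def A8 := mkPM 8 ![0,13,3,2,6,7,4,5,8,10,9,12,11,1] (by decide) (by decide) (by decide)
def B8 := mkPM 8 ![0,3,4,1,2,6,5,9,8,7,12,13,10,11] (by decide) (by decide) (by decide)
def A11 := mkPM 11 ![0,3,4,1,2,6,5,9,10,7,8,11,13,12] (by decide) (by decide) (by decide)
def B11 := mkPM 11 ![0,13,3,2,6,7,4,5,9,8,12,11,10,1] (by decide) (by decide) (by decide)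

lemma uniq1 (M : (G0.induce {z : Fin 14 | z ≠ 0 ∧ z ≠ (1:Fin 14)}).Subgraph)
    (hm : M.IsPerfectMatching) : M = A1 := by
  obtain ⟨b3, hb3, hL3, h3⟩ := partner_opts hm 3 (by decide) (by decide) [2,4] (by decide)
  fin_cases hL3
  · -- 3-2
    obtain ⟨b4, hb4, hL4, h4⟩ := partner_opts hm 4 (by decide) (by decide) [2,3,6] (by decide)
    fin_cases hL4
    · exact (conflict hm h3.symm h4.symm (by decide)).elim
    · exact (conflict hm h3 h4.symm (by decide)).elim
    · -- 4-6
      obtain ⟨b5, hb5, hL5, h5⟩ := partner_opts hm 5 (by decide) (by decide) [6,7] (by decide)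
      fin_cases hL5
      · exact (conflict hm h4.symm h5.symm (by decide)).elim
      · -- 5-7
        obtain ⟨b9, hb9, hL9, h9⟩ := partner_opts hm 9 (by decide) (by decide) [7,8,10] (by decide)
        fin_cases hL9
        · exact (conflict hm h5.symm h9.symm (by decide)).elim
        · -- 9-8
          obtain ⟨b10, hb10, hL10, h10⟩ := partner_opts hm 10 (by decide) (by decide) [8,9,12] (by decide)
          fin_cases hL10
          · exact (conflict hm h9.symm h10.symm (by decide)).elim
          · exact (conflict hm h9 h10.symm (by decide)).elim
          · -- 10-12
            obtain ⟨b11, hb11, hL11, h11⟩ := partner_opts hm 11 (by decide) (by decide) [12,13] (by decide)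
            fin_cases hL11
            · exact (conflict hm h10.symm h11.symm (by decide)).elim
            · -- 11-13: done
              refine (eq_mkPM hm ?_)
              intro n hn
              fin_cases n <;>
                first
                | exact absurd rfl hn.1
                | exact absurd rfl hn.2
                | exact adj_cast h3 rfl
                | exact adj_cast h3.symm rfl
                | exact adj_cast h4 rfl
                | exact adj_cast h4.symm rfl
                | exact adj_cast h5 rfl
                | exact adj_cast h5.symm rfl
                | exact adj_cast h9 rfl
                | exact adj_cast h9.symm rfl
                | exact adj_cast h10 rfl
                | exact adj_cast h10.symm rfl
                | exact adj_cast h11 rfl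
                | exact adj_cast h11.symm rfl
        · -- 9-10
          obtain ⟨b8, hb8, hL8, h8⟩ := partner_opts hm 8 (by decide) (by decide) [9,10] (by decide)
          fin_cases hL8
          · exact (conflict hm h9 h8.symm (by decide)).elim
          · exact (conflict hm h9.symm h8.symm (by decide)).elim
  · -- 3-4
    obtain ⟨b2, hb2, hL2, h2⟩ := partner_opts hm 2 (by decide) (by decide) [3,4] (by decide)
    fin_cases hL2
    · exact (conflict hm h3 h2.symm (by decide)).elim
    · exact (conflict hm h3.symm h2.symm (by decide)).elim

lemma uniq2 (M : (G0.induce {z : Fin 14 | z ≠ 0 ∧ z ≠ (2:Fin 14)}).Subgraph)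
    (hm : M.IsPerfectMatching) : M = A2 ∨ M = B2 := by
  obtain ⟨b1, hb1, hL1, h1⟩ := partner_opts hm 1 (by decide) (by decide) [3,13] (by decide)
  fin_cases hL1
  · -- 1-3
    obtain ⟨b4, hb4, hL4, h4⟩ := partner_opts hm 4 (by decide) (by decide) [3,6] (by decide)
    fin_cases hL4
    · exact (conflict hm h1.symm h4.symm (by decide)).elim
    · -- 4-6
      obtain ⟨b5, hb5, hL5, h5⟩ := partner_opts hm 5 (by decide) (by decide) [6,7] (by decide)
      fin_cases hL5
      · exact (conflict hm h4.symm h5.symm (by decide)).elim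
      · -- 5-7
        obtain ⟨b9, hb9, hL9, h9⟩ := partner_opts hm 9 (by decide) (by decide) [7,8,10] (by decide)
        fin_cases hL9
        · exact (conflict hm h5.symm h9.symm (by decide)).elim
        · -- 9-8
          obtain ⟨b10, hb10, hL10, h10⟩ := partner_opts hm 10 (by decide) (by decide) [8,9,12] (by decide)
          fin_cases hL10
          · exact (conflict hm h9.symm h10.symm (by decide)).elim
          · exact (conflict hm h9 h10.symm (by decide)).elim
          · -- 10-12
            obtain ⟨b11, hb11, hL11, h11⟩ := partner_opts hm 11 (by decide) (by decide) [12,13] (by decide)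
            fin_cases hL11
            · exact (conflict hm h10.symm h11.symm (by decide)).elim
            · -- 11-13: A2
              refine Or.inl (eq_mkPM hm ?_)
              intro n hn
              fin_cases n <;>
                first
                | exact absurd rfl hn.1
                | exact absurd rfl hn.2
                | exact adj_cast h1 rfl
                | exact adj_cast h1.symm rfl
                | exact adj_cast h4 rfl
                | exact adj_cast h4.symm rfl
                | exact adj_cast h5 rfl
                | exact adj_cast h5.symm rfl
                | exact adj_cast h9 rfl
                | exact adj_cast h9.symm rfl
                | exact adj_cast h10 rfl
                | exact adj_cast h10.symm rfl
                | exact adj_cast h11 rfl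
                | exact adj_cast h11.symm rfl
        · -- 9-10
          obtain ⟨b8, hb8, hL8, h8⟩ := partner_opts hm 8 (by decide) (by decide) [9,10] (by decide)
          fin_cases hL8
          · exact (conflict hm h9 h8.symm (by decide)).elim
          · exact (conflict hm h9.symm h8.symm (by decide)).elim
  · -- 1-13
    obtain ⟨b3, hb3, hL3, h3⟩ := partner_opts hm 3 (by decide) (by decide) [1,4] (by decide)
    fin_cases hL3
    · exact (conflict hm h1 h3.symm (by decide)).elim
    · -- 3-4
      obtain ⟨b6, hb6, hL6, h6⟩ := partner_opts hm 6 (by decide) (by decide) [4,5,7] (by decide)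
      fin_cases hL6
      · exact (conflict hm h3.symm h6.symm (by decide)).elim
      · -- 6-5
        obtain ⟨b7, hb7, hL7, h7⟩ := partner_opts hm 7 (by decide) (by decide) [5,6,9] (by decide)
        fin_cases hL7
        · exact (conflict hm h6.symm h7.symm (by decide)).elim
        · exact (conflict hm h6 h7.symm (by decide)).elim
        · -- 7-9
          obtain ⟨b10, hb10, hL10, h10⟩ := partner_opts hm 10 (by decide) (by decide) [8,9,12] (by decide)
          fin_cases hL10
          · -- 10-8
            obtain ⟨b12, hb12, hL12, h12⟩ := partner_opts hm 12 (by decide) (by decide) [10,11,13] (by decide)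
            fin_cases hL12
            · exact (conflict hm h10 h12.symm (by decide)).elim
            · -- 12-11: B2
              refine Or.inr (eq_mkPM hm ?_)
              intro n hn
              fin_cases n <;>
                first
                | exact absurd rfl hn.1
                | exact absurd rfl hn.2
                | exact adj_cast h1 rfl
                | exact adj_cast h1.symm rfl
                | exact adj_cast h3 rfl
                | exact adj_cast h3.symm rfl
                | exact adj_cast h6 rfl
                | exact adj_cast h6.symm rfl
                | exact adj_cast h7 rfl
                | exact adj_cast h7.symm rfl
                | exact adj_cast h10 rfl
                | exact adj_cast h10.symm rfl
                | exact adj_cast h12 rfl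
                | exact adj_cast h12.symm rfl
            · exact (conflict hm h1.symm h12.symm (by decide)).elim
          · exact (conflict hm h7.symm h10.symm (by decide)).elim
          · -- 10-12
            obtain ⟨b8, hb8, hL8, h8⟩ := partner_opts hm 8 (by decide) (by decide) [9,10] (by decide)
            fin_cases hL8
            · exact (conflict hm h7.symm h8.symm (by decide)).elim
            · exact (conflict hm h10 h8.symm (by decide)).elim
      · -- 6-7
        obtain ⟨b5, hb5, hL5, h5⟩ := partner_opts hm 5 (by decide) (by decide) [6,7] (by decide)
        fin_cases hL5
        · exact (conflict hm h6 h5.symm (by decide)).elim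
        · exact (conflict hm h6.symm h5.symm (by decide)).elim

lemma uniq5 (M : (G0.induce {z : Fin 14 | z ≠ 0 ∧ z ≠ (5:Fin 14)}).Subgraph)
    (hm : M.IsPerfectMatching) : M = A5 ∨ M = B5 := by
  obtain ⟨b6, hb6, hL6, h6⟩ := partner_opts hm 6 (by decide) (by decide) [4,7] (by decide)
  fin_cases hL6
  · -- 6-4
    obtain ⟨b7, hb7, hL7, h7⟩ := partner_opts hm 7 (by decide) (by decide) [6,9] (by decide)
    fin_cases hL7
    · exact (conflict hm h6 h7.symm (by decide)).elim
    · -- 7-9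
      obtain ⟨b2, hb2, hL2, h2⟩ := partner_opts hm 2 (by decide) (by decide) [3,4] (by decide)
      fin_cases hL2
      · -- 2-3
        obtain ⟨b1, hb1, hL1, h1⟩ := partner_opts hm 1 (by decide) (by decide) [3,13] (by decide)
        fin_cases hL1
        · exact (conflict hm h2.symm h1.symm (by decide)).elim
        · -- 1-13
          obtain ⟨b10, hb10, hL10, h10⟩ := partner_opts hm 10 (by decide) (by decide) [8,9,12] (by decide)
          fin_cases hL10
          · -- 10-8
            obtain ⟨b12, hb12, hL12, h12⟩ := partner_opts hm 12 (by decide) (by decide) [10,11,13] (by decide)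
            fin_cases hL12
            · exact (conflict hm h10 h12.symm (by decide)).elim
            · -- 12-11: B5
              refine Or.inr (eq_mkPM hm ?_)
              intro n hn
              fin_cases n <;>
                first
                | exact absurd rfl hn.1
                | exact absurd rfl hn.2
                | exact adj_cast h6 rfl
                | exact adj_cast h6.symm rfl
                | exact adj_cast h7 rfl
                | exact adj_cast h7.symm rfl
                | exact adj_cast h2 rfl
                | exact adj_cast h2.symm rfl
                | exact adj_cast h1 rfl
                | exact adj_cast h1.symm rfl
                | exact adj_cast h10 rfl
                | exact adj_cast h10.symm rfl
                | exact adj_cast h12 rfl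
                | exact adj_cast h12.symm rfl
            · exact (conflict hm h1.symm h12.symm (by decide)).elim
          · exact (conflict hm h7.symm h10.symm (by decide)).elim
          · -- 10-12
            obtain ⟨b8, hb8, hL8, h8⟩ := partner_opts hm 8 (by decide) (by decide) [9,10] (by decide)
            fin_cases hL8
            · exact (conflict hm h7.symm h8.symm (by decide)).elim
            · exact (conflict hm h10 h8.symm (by decide)).elim
      · exact (conflict hm h6.symm h2.symm (by decide)).elim
  · -- 6-7
    obtain ⟨b4, hb4, hL4, h4⟩ := partner_opts hm 4 (by decide) (by decide) [2,3,6] (by decide)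
    fin_cases hL4
    · -- 4-2
      obtain ⟨b3, hb3, hL3, h3⟩ := partner_opts hm 3 (by decide) (by decide) [1,2,4] (by decide)
      fin_cases hL3
      · -- 3-1
        obtain ⟨b9, hb9, hL9, h9⟩ := partner_opts hm 9 (by decide) (by decide) [7,8,10] (by decide)
        fin_cases hL9
        · exact (conflict hm h6.symm h9.symm (by decide)).elim
        · -- 9-8
          obtain ⟨b10, hb10, hL10, h10⟩ := partner_opts hm 10 (by decide) (by decide) [8,9,12] (by decide)
          fin_cases hL10
          · exact (conflict hm h9.symm h10.symm (by decide)).elim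
          · exact (conflict hm h9 h10.symm (by decide)).elim
          · -- 10-12
            obtain ⟨b11, hb11, hL11, h11⟩ := partner_opts hm 11 (by decide) (by decide) [12,13] (by decide)
            fin_cases hL11
            · exact (conflict hm h10.symm h11.symm (by decide)).elim
            · -- 11-13: A5
              refine Or.inl (eq_mkPM hm ?_)
              intro n hn
              fin_cases n <;>
                first
                | exact absurd rfl hn.1
                | exact absurd rfl hn.2
                | exact adj_cast h6 rfl
                | exact adj_cast h6.symm rfl
                | exact adj_cast h4 rfl
                | exact adj_cast h4.symm rfl
                | exact adj_cast h3 rfl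
                | exact adj_cast h3.symm rfl
                | exact adj_cast h9 rfl
                | exact adj_cast h9.symm rfl
                | exact adj_cast h10 rfl
                | exact adj_cast h10.symm rfl
                | exact adj_cast h11 rfl
                | exact adj_cast h11.symm rfl
        · -- 9-10
          obtain ⟨b8, hb8, hL8, h8⟩ := partner_opts hm 8 (by decide) (by decide) [9,10] (by decide)
          fin_cases hL8
          · exact (conflict hm h9 h8.symm (by decide)).elim
          · exact (conflict hm h9.symm h8.symm (by decide)).elim
      · exact (conflict hm h4.symm h3.symm (by decide)).elim
      · exact (conflict hm h4 h3.symm (by decide)).elim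
    · -- 4-3
      obtain ⟨b2, hb2, hL2, h2⟩ := partner_opts hm 2 (by decide) (by decide) [3,4] (by decide)
      fin_cases hL2
      · exact (conflict hm h4.symm h2.symm (by decide)).elim
      · exact (conflict hm h4 h2.symm (by decide)).elim
    · exact (conflict hm h6 h4.symm (by decide)).elim

lemma uniq8 (M : (G0.induce {z : Fin 14 | z ≠ 0 ∧ z ≠ (8:Fin 14)}).Subgraph)
    (hm : M.IsPerfectMatching) : M = A8 ∨ M = B8 := by
  obtain ⟨b9, hb9, hL9, h9⟩ := partner_opts hm 9 (by decide) (by decide) [7,10] (by decide)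
  fin_cases hL9
  · -- 9-7
    obtain ⟨b5, hb5, hL5, h5⟩ := partner_opts hm 5 (by decide) (by decide) [6,7] (by decide)
    fin_cases hL5
    · -- 5-6
      obtain ⟨b4, hb4, hL4, h4⟩ := partner_opts hm 4 (by decide) (by decide) [2,3,6] (by decide)
      fin_cases hL4
      · -- 4-2
        obtain ⟨b1, hb1, hL1, h1⟩ := partner_opts hm 1 (by decide) (by decide) [3,13] (by decide)
        fin_cases hL1
        · -- 1-3
          obtain ⟨b10, hb10, hL10, h10⟩ := partner_opts hm 10 (by decide) (by decide) [9,12] (by decide)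
          fin_cases hL10
          · exact (conflict hm h9 h10.symm (by decide)).elim
          · -- 10-12
            obtain ⟨b11, hb11, hL11, h11⟩ := partner_opts hm 11 (by decide) (by decide) [12,13] (by decide)
            fin_cases hL11
            · exact (conflict hm h10.symm h11.symm (by decide)).elim
            · -- 11-13: B8
              refine Or.inr (eq_mkPM hm ?_)
              intro n hn
              fin_cases n <;>
                first
                | exact absurd rfl hn.1
                | exact absurd rfl hn.2
                | exact adj_cast h9 rfl
                | exact adj_cast h9.symm rfl
                | exact adj_cast h5 rfl
                | exact adj_cast h5.symm rfl
                | exact adj_cast h4 rfl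
                | exact adj_cast h4.symm rfl
                | exact adj_cast h1 rfl
                | exact adj_cast h1.symm rfl
                | exact adj_cast h10 rfl
                | exact adj_cast h10.symm rfl
                | exact adj_cast h11 rfl
                | exact adj_cast h11.symm rfl
        · -- 1-13
          obtain ⟨b3, hb3, hL3, h3⟩ := partner_opts hm 3 (by decide) (by decide) [1,2,4] (by decide)
          fin_cases hL3
          · exact (conflict hm h1 h3.symm (by decide)).elim
          · exact (conflict hm h4.symm h3.symm (by decide)).elim
          · exact (conflict hm h4 h3.symm (by decide)).elim
      · -- 4-3
        obtain ⟨b2, hb2, hL2, h2⟩ := partner_opts hm 2 (by decide) (by decide) [3,4] (by decide)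
        fin_cases hL2
        · exact (conflict hm h4.symm h2.symm (by decide)).elim
        · exact (conflict hm h4 h2.symm (by decide)).elim
      · exact (conflict hm h5.symm h4.symm (by decide)).elim
    · exact (conflict hm h9.symm h5.symm (by decide)).elim
  · -- 9-10
    obtain ⟨b12, hb12, hL12, h12⟩ := partner_opts hm 12 (by decide) (by decide) [10,11,13] (by decide)
    fin_cases hL12
    · exact (conflict hm h9.symm h12.symm (by decide)).elim
    · -- 12-11
      obtain ⟨b13, hb13, hL13, h13⟩ := partner_opts hm 13 (by decide) (by decide) [1,11,12] (by decide)
      fin_cases hL13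
      · -- 13-1
        obtain ⟨b3, hb3, hL3, h3⟩ := partner_opts hm 3 (by decide) (by decide) [1,2,4] (by decide)
        fin_cases hL3
        · exact (conflict hm h13.symm h3.symm (by decide)).elim
        · -- 3-2
          obtain ⟨b4, hb4, hL4, h4⟩ := partner_opts hm 4 (by decide) (by decide) [2,3,6] (by decide)
          fin_cases hL4
          · exact (conflict hm h3.symm h4.symm (by decide)).elim
          · exact (conflict hm h3 h4.symm (by decide)).elim
          · -- 4-6
            obtain ⟨b5, hb5, hL5, h5⟩ := partner_opts hm 5 (by decide) (by decide) [6,7] (by decide)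
            fin_cases hL5
            · exact (conflict hm h4.symm h5.symm (by decide)).elim
            · -- 5-7: A8
              refine Or.inl (eq_mkPM hm ?_)
              intro n hn
              fin_cases n <;>
                first
                | exact absurd rfl hn.1
                | exact absurd rfl hn.2
                | exact adj_cast h9 rfl
                | exact adj_cast h9.symm rfl
                | exact adj_cast h12 rfl
                | exact adj_cast h12.symm rfl
                | exact adj_cast h13 rfl
                | exact adj_cast h13.symm rfl
                | exact adj_cast h3 rfl
                | exact adj_cast h3.symm rfl
                | exact adj_cast h4 rfl
                | exact adj_cast h4.symm rfl
                | exact adj_cast h5 rfl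
                | exact adj_cast h5.symm rfl
        · -- 3-4
          obtain ⟨b2, hb2, hL2, h2⟩ := partner_opts hm 2 (by decide) (by decide) [3,4] (by decide)
          fin_cases hL2
          · exact (conflict hm h3 h2.symm (by decide)).elim
          · exact (conflict hm h3.symm h2.symm (by decide)).elim
      · exact (conflict hm h12.symm h13.symm (by decide)).elim
      · exact (conflict hm h12 h13.symm (by decide)).elim
    · -- 12-13
      obtain ⟨b11, hb11, hL11, h11⟩ := partner_opts hm 11 (by decide) (by decide) [12,13] (by decide)
      fin_cases hL11
      · exact (conflict hm h12 h11.symm (by decide)).elim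
      · exact (conflict hm h12.symm h11.symm (by decide)).elim

lemma uniq11 (M : (G0.induce {z : Fin 14 | z ≠ 0 ∧ z ≠ (11:Fin 14)}).Subgraph)
    (hm : M.IsPerfectMatching) : M = A11 ∨ M = B11 := by
  obtain ⟨b12, hb12, hL12, h12⟩ := partner_opts hm 12 (by decide) (by decide) [10,13] (by decide)
  fin_cases hL12
  · -- 12-10
    obtain ⟨b13, hb13, hL13, h13⟩ := partner_opts hm 13 (by decide) (by decide) [1,12] (by decide)
    fin_cases hL13
    · -- 13-1
      obtain ⟨b3, hb3, hL3, h3⟩ := partner_opts hm 3 (by decide) (by decide) [1,2,4] (by decide)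
      fin_cases hL3
      · exact (conflict hm h13.symm h3.symm (by decide)).elim
      · -- 3-2
        obtain ⟨b4, hb4, hL4, h4⟩ := partner_opts hm 4 (by decide) (by decide) [2,3,6] (by decide)
        fin_cases hL4
        · exact (conflict hm h3.symm h4.symm (by decide)).elim
        · exact (conflict hm h3 h4.symm (by decide)).elim
        · -- 4-6
          obtain ⟨b5, hb5, hL5, h5⟩ := partner_opts hm 5 (by decide) (by decide) [6,7] (by decide)
          fin_cases hL5
          · exact (conflict hm h4.symm h5.symm (by decide)).elim
          · -- 5-7
            obtain ⟨b9, hb9, hL9, h9⟩ := partner_opts hm 9 (by decide) (by decide) [7,8,10] (by decide)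
            fin_cases hL9
            · exact (conflict hm h5.symm h9.symm (by decide)).elim
            · -- 9-8: B11
              refine Or.inr (eq_mkPM hm ?_)
              intro n hn
              fin_cases n <;>
                first
                | exact absurd rfl hn.1
                | exact absurd rfl hn.2
                | exact adj_cast h12 rfl
                | exact adj_cast h12.symm rfl
                | exact adj_cast h13 rfl
                | exact adj_cast h13.symm rfl
                | exact adj_cast h3 rfl
                | exact adj_cast h3.symm rfl
                | exact adj_cast h4 rfl
                | exact adj_cast h4.symm rfl
                | exact adj_cast h5 rfl
                | exact adj_cast h5.symm rfl
                | exact adj_cast h9 rfl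
                | exact adj_cast h9.symm rfl
            · exact (conflict hm h12.symm h9.symm (by decide)).elim
      · -- 3-4
        obtain ⟨b2, hb2, hL2, h2⟩ := partner_opts hm 2 (by decide) (by decide) [3,4] (by decide)
        fin_cases hL2
        · exact (conflict hm h3 h2.symm (by decide)).elim
        · exact (conflict hm h3.symm h2.symm (by decide)).elim
    · exact (conflict hm h12 h13.symm (by decide)).elim
  · -- 12-13
    obtain ⟨b1, hb1, hL1, h1⟩ := partner_opts hm 1 (by decide) (by decide) [3,13] (by decide)
    fin_cases hL1
    · -- 1-3
      obtain ⟨b2, hb2, hL2, h2⟩ := partner_opts hm 2 (by decide) (by decide) [3,4] (by decide)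
      fin_cases hL2
      · exact (conflict hm h1.symm h2.symm (by decide)).elim
      · -- 2-4
        obtain ⟨b6, hb6, hL6, h6⟩ := partner_opts hm 6 (by decide) (by decide) [4,5,7] (by decide)
        fin_cases hL6
        · exact (conflict hm h2.symm h6.symm (by decide)).elim
        · -- 6-5
          obtain ⟨b7, hb7, hL7, h7⟩ := partner_opts hm 7 (by decide) (by decide) [5,6,9] (by decide)
          fin_cases hL7
          · exact (conflict hm h6.symm h7.symm (by decide)).elim
          · exact (conflict hm h6 h7.symm (by decide)).elim
          · -- 7-9
            obtain ⟨b10, hb10, hL10, h10⟩ := partner_opts hm 10 (by decide) (by decide) [8,9,12] (by decide)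
            fin_cases hL10
            · -- 10-8: A11
              refine Or.inl (eq_mkPM hm ?_)
              intro n hn
              fin_cases n <;>
                first
                | exact absurd rfl hn.1
                | exact absurd rfl hn.2
                | exact adj_cast h12 rfl
                | exact adj_cast h12.symm rfl
                | exact adj_cast h1 rfl
                | exact adj_cast h1.symm rfl
                | exact adj_cast h2 rfl
                | exact adj_cast h2.symm rfl
                | exact adj_cast h6 rfl
                | exact adj_cast h6.symm rfl
                | exact adj_cast h7 rfl
                | exact adj_cast h7.symm rfl
                | exact adj_cast h10 rfl
                | exact adj_cast h10.symm rfl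
            · exact (conflict hm h7.symm h10.symm (by decide)).elim
            · exact (conflict hm h12 h10.symm (by decide)).elim
        · -- 6-7
          obtain ⟨b5, hb5, hL5, h5⟩ := partner_opts hm 5 (by decide) (by decide) [6,7] (by decide)
          fin_cases hL5
          · exact (conflict hm h6 h5.symm (by decide)).elim
          · exact (conflict hm h6.symm h5.symm (by decide)).elim
    · exact (conflict hm h12.symm h1.symm (by decide)).elim

lemma count1 : numPM (G0.induce {z : Fin 14 | z ≠ 0 ∧ z ≠ (1:Fin 14)}) = 1 := by
  have h : {M : (G0.induce {z : Fin 14 | z ≠ 0 ∧ z ≠ (1:Fin 14)}).Subgraph |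
      M.IsPerfectMatching} = {A1} := by
    ext M
    simp only [Set.mem_setOf_eq, Set.mem_singleton_iff]
    exact ⟨uniq1 M, fun h => h ▸ mkPM_isPM _ _ _ _ _⟩
  rw [numPM, h, Set.ncard_singleton]

lemma count2 : numPM (G0.induce {z : Fin 14 | z ≠ 0 ∧ z ≠ (2:Fin 14)}) = 2 := by
  have h : {M : (G0.induce {z : Fin 14 | z ≠ 0 ∧ z ≠ (2:Fin 14)}).Subgraph |
      M.IsPerfectMatching} = {A2, B2} := by
    ext M
    simp only [Set.mem_setOf_eq, Set.mem_insert_iff, Set.mem_singleton_iff]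
    refine ⟨uniq2 M, ?_⟩
    rintro (rfl | rfl)
    exacts [mkPM_isPM _ _ _ _ _, mkPM_isPM _ _ _ _ _]
  rw [numPM, h]
  exact Set.ncard_pair (mkPM_ne 1 ⟨by decide, by decide⟩ (by decide))

lemma count5 : numPM (G0.induce {z : Fin 14 | z ≠ 0 ∧ z ≠ (5:Fin 14)}) = 2 := by
  have h : {M : (G0.induce {z : Fin 14 | z ≠ 0 ∧ z ≠ (5:Fin 14)}).Subgraph |
      M.IsPerfectMatching} = {A5, B5} := by
    ext M
    simp only [Set.mem_setOf_eq, Set.mem_insert_iff, Set.mem_singleton_iff]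
    refine ⟨uniq5 M, ?_⟩
    rintro (rfl | rfl)
    exacts [mkPM_isPM _ _ _ _ _, mkPM_isPM _ _ _ _ _]
  rw [numPM, h]
  exact Set.ncard_pair (mkPM_ne 1 ⟨by decide, by decide⟩ (by decide))

lemma count8 : numPM (G0.induce {z : Fin 14 | z ≠ 0 ∧ z ≠ (8:Fin 14)}) = 2 := by
  have h : {M : (G0.induce {z : Fin 14 | z ≠ 0 ∧ z ≠ (8:Fin 14)}).Subgraph |
      M.IsPerfectMatching} = {A8, B8} := by
    ext M
    simp only [Set.mem_setOf_eq, Set.mem_insert_iff, Set.mem_singleton_iff]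
    refine ⟨uniq8 M, ?_⟩
    rintro (rfl | rfl)
    exacts [mkPM_isPM _ _ _ _ _, mkPM_isPM _ _ _ _ _]
  rw [numPM, h]
  exact Set.ncard_pair (mkPM_ne 1 ⟨by decide, by decide⟩ (by decide))

lemma count11 : numPM (G0.induce {z : Fin 14 | z ≠ 0 ∧ z ≠ (11:Fin 14)}) = 2 := by
  have h : {M : (G0.induce {z : Fin 14 | z ≠ 0 ∧ z ≠ (11:Fin 14)}).Subgraph |
      M.IsPerfectMatching} = {A11, B11} := by
    ext M
    simp only [Set.mem_setOf_eq, Set.mem_insert_iff, Set.mem_singleton_iff]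
    refine ⟨uniq11 M, ?_⟩
    rintro (rfl | rfl)
    exacts [mkPM_isPM _ _ _ _ _, mkPM_isPM _ _ _ _ _]
  rw [numPM, h]
  exact Set.ncard_pair (mkPM_ne 1 ⟨by decide, by decide⟩ (by decide))

/-- For every neighbor `v` of the hub `u = 0` of `G₀`: if `v` lies in a
triangle of `G₀`, then `G₀ − {u, v}` has exactly two perfect matchings; otherwise,
`G₀ − {u, v}` has exactly one perfect matching. -/
theorem stmt4 :
    ∀ v : Fin 14, G0.Adj 0 v →
      ((∃ w x : Fin 14, G0.Adj v w ∧ G0.Adj w x ∧ G0.Adj x v) →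
        numPM (G0.induce {z : Fin 14 | z ≠ 0 ∧ z ≠ v}) = 2) ∧
      (¬ (∃ w x : Fin 14, G0.Adj v w ∧ G0.Adj w x ∧ G0.Adj x v) →
        numPM (G0.induce {z : Fin 14 | z ≠ 0 ∧ z ≠ v}) = 1) := by
  intro v hv
  fin_cases v
  · exact absurd hv (by decide)
  · exact ⟨fun h => absurd h (by decide), fun _ => count1⟩
  · exact ⟨fun _ => count2, fun h => absurd ⟨3, 4, by decide, by decide, by decide⟩ h⟩
  · exact absurd hv (by decide)
  · exact absurd hv (by decide)
  · exact ⟨fun _ => count5, fun h => absurd ⟨6, 7, by decide, by decide, by decide⟩ h⟩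
  · exact absurd hv (by decide)
  · exact absurd hv (by decide)
  · exact ⟨fun _ => count8, fun h => absurd ⟨9, 10, by decide, by decide, by decide⟩ h⟩
  · exact absurd hv (by decide)
  · exact absurd hv (by decide)
  · exact ⟨fun _ => count11, fun h => absurd ⟨12, 13, by decide, by decide, by decide⟩ h⟩
  · exact absurd hv (by decide)
  · exact absurd hv (by decide)
end
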